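/- arXiv:1703.10218 — 4 statements merged into one kernel-verified Lean document; each statement's English description precedes it below -/
import Mathlib

section
/- Let ψ⁺ be a forward stationary solution, let N ∈ ℕ and φ ∈ C(𝕋^d), and define Q^N(x, n) = K_{−N,n}φ(x) − ψ⁺(x, n) for integers −N ≤ n ≤ 0 (with K_{−N,−N}φ = φ). If γ is a minimizer for K_{−N,0}φ at γ(0), then Q^N(γ(j), j) ≤ Q^N(γ(k), k) for all integers −N ≤ j < k ≤ 0. -/
open MeasureTheory

noncomputable section

/-- Euclidean space ℝ^d. -/
abbrev V (d : ℕ) := EuclideanSpace ℝ (Fin d)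

/-- The torus 𝕋^d = ℝ^d/ℤ^d, as a product of circles, with its quotient distance. -/
abbrev Torus (d : ℕ) := Fin d → AddCircle (1 : ℝ)

/-- The canonical projection ℝ^d → 𝕋^d. -/
def projT {d : ℕ} (x : V d) : Torus d := fun i => (x i : AddCircle (1 : ℝ))

/-- `ζ` is an absolutely continuous curve on `[s,t]` with (square-integrable)
derivative `g`. -/
def IsAC {d : ℕ} (ζ g : ℝ → V d) (s t : ℝ) : Prop :=
  IntegrableOn g (Set.Icc s t) ∧ IntegrableOn (fun τ => ‖g τ‖ ^ 2) (Set.Icc s t) ∧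
    ∀ τ ∈ Set.Icc s t, ζ τ = ζ s + ∫ u in s..τ, g u

/-- The action 𝔸(ζ) = ∫_s^t (½|ζ̇|² − b·ζ̇) dτ − Σ_{s ≤ j < t} F_j(ζ(j)) of the curve `ζ`
with derivative `g`, for the kicked potentials `F`. -/
def action {d : ℕ} (F : ℤ → Torus d → ℝ) (b : V d) (ζ g : ℝ → V d) (s t : ℝ) : ℝ :=
  (∫ τ in s..t, ((1 : ℝ) / 2 * ‖g τ‖ ^ 2 - (inner ℝ b (g τ) : ℝ))) -
    ∑ j ∈ Finset.Ico ⌈s⌉ ⌈t⌉, F j (projT (ζ (j : ℝ)))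

/-- The action function A_{s,t}(x,x') = inf over absolutely continuous curves from
`x` to `x'`. -/
def actFn {d : ℕ} (F : ℤ → Torus d → ℝ) (b : V d) (s t : ℝ) (x x' : Torus d) : ℝ :=
  sInf {a | ∃ ζ g : ℝ → V d, IsAC ζ g s t ∧ projT (ζ s) = x ∧ projT (ζ t) = x' ∧
    action F b ζ g s t = a}

/-- The backward Lax–Oleinik operator K_{s,t}φ(x) = min_y (φ(y) + A_{s,t}(y,x)), with
the convention K_{s,s}φ = φ. -/
def KOp {d : ℕ} (F : ℤ → Torus d → ℝ) (b : V d) (s t : ℝ) (φ : Torus d → ℝ) :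
    Torus d → ℝ :=
  if s < t then fun x => sInf {a | ∃ y : Torus d, a = φ y + actFn F b s t y x} else φ

/-- The forward Lax–Oleinik operator Ǩ_{s,t}φ(x) = max_y (φ(y) − A_{s,t}(x,y)), with
the convention Ǩ_{s,s}φ = φ. -/
def KChk {d : ℕ} (F : ℤ → Torus d → ℝ) (b : V d) (s t : ℝ) (φ : Torus d → ℝ) :
    Torus d → ℝ :=
  if s < t then fun x => sSup {a | ∃ y : Torus d, a = φ y - actFn F b s t x y} else φ

/-- The seminorm ‖ψ‖_* = min_C sup_x |ψ(x) − C|. -/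
def starNorm {d : ℕ} (ψ : Torus d → ℝ) : ℝ := ⨅ C : ℝ, ⨆ x : Torus d, |ψ x - C|

/-- A minimizer for `K_{m,n}φ` at its terminal point `ζ(n)`. -/
def IsMinimizer {d : ℕ} (F : ℤ → Torus d → ℝ) (b : V d) (m n : ℤ) (φ : Torus d → ℝ)
    (ζ g : ℝ → V d) : Prop :=
  IsAC ζ g m n ∧
    KOp F b m n φ (projT (ζ (n : ℝ))) = φ (projT (ζ (m : ℝ))) + action F b ζ g m n

/-- A curve attaining `Ǩ_{m,n}φ` at its initial point `ζ(m)`. -/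
def IsMaximizer {d : ℕ} (F : ℤ → Torus d → ℝ) (b : V d) (m n : ℤ) (φ : Torus d → ℝ)
    (ζ g : ℝ → V d) : Prop :=
  IsAC ζ g m n ∧
    KChk F b m n φ (projT (ζ (m : ℝ))) = φ (projT (ζ (n : ℝ))) - action F b ζ g m n

/-- A backward stationary solution. -/
def IsBackwardSol {d : ℕ} (F : ℤ → Torus d → ℝ) (b : V d) (ψ : Torus d → ℤ → ℝ) : Prop :=
  (∀ n : ℤ, Continuous fun x => ψ x n) ∧
    ∀ m n : ℤ, m < n → ∀ x, KOp F b m n (fun y => ψ y m) x = ψ x n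

/-- A forward stationary solution. -/
def IsForwardSol {d : ℕ} (F : ℤ → Torus d → ℝ) (b : V d) (ψ : Torus d → ℤ → ℝ) : Prop :=
  (∀ n : ℤ, Continuous fun x => ψ x n) ∧
    ∀ m n : ℤ, m < n → ∀ x, KChk F b m n (fun y => ψ y n) x = ψ x m

/-- `ζ` is affine on each interval `[j-1, j]` with (left) velocity `v j`. -/
def AffineOnUnit {d : ℕ} (ζ : ℝ → V d) (v : ℤ → V d) (m n : ℤ) : Prop :=
  ∀ j : ℤ, m < j → j ≤ n → ∀ τ ∈ Set.Icc ((j : ℝ) - 1) (j : ℝ),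
    ζ τ = ζ (j : ℝ) + (τ - (j : ℝ)) • v j

/-! ### Auxiliary lemmas -/

section St8Aux

variable {d : ℕ}

lemma st8_fact : Fact ((0:ℝ) < 1) := ⟨one_pos⟩

/-- Every torus point has a lift of norm at most `√d`. -/
lemma st8_lift (x : Torus d) : ∃ y : V d, projT y = x ∧ ‖y‖ ≤ Real.sqrt d := by
  haveI := st8_fact
  refine ⟨WithLp.toLp 2 (fun i => ((AddCircle.equivIco (1:ℝ) 0 (x i) : ℝ))), ?_, ?_⟩
  · funext i
    exact (AddCircle.equivIco (1:ℝ) 0).symm_apply_apply (x i)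
  · rw [EuclideanSpace.norm_eq]
    have : ∀ i : Fin d, ‖((AddCircle.equivIco (1:ℝ) 0 (x i) : ℝ))‖ ^ 2 ≤ 1 := by
      intro i
      have h : ((AddCircle.equivIco (1:ℝ) 0 (x i) : ℝ)) ∈ Set.Ico (0:ℝ) (0 + 1) :=
        (AddCircle.equivIco (1:ℝ) 0 (x i)).2
      simp only [Real.norm_eq_abs, sq_abs]
      nlinarith [h.1, h.2]
    calc Real.sqrt (∑ i : Fin d, ‖((AddCircle.equivIco (1:ℝ) 0 (x i) : ℝ))‖ ^ 2)
        ≤ Real.sqrt (∑ _i : Fin d, (1:ℝ)) :=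
          Real.sqrt_le_sqrt (Finset.sum_le_sum fun i _ => this i)
      _ = Real.sqrt d := by simp

/-- Any continuous function on `ℝ^d` which factors through the torus is bounded. -/
lemma st8_bound {f : Torus d → ℝ} (hf : Continuous fun y : V d => f (projT y)) :
    ∃ M : ℝ, ∀ x : Torus d, |f x| ≤ M := by
  obtain ⟨C, hC⟩ := (isCompact_closedBall (0 : V d) (Real.sqrt d)).exists_bound_of_continuousOn
    hf.continuousOn
  refine ⟨C, fun x => ?_⟩
  obtain ⟨y, hy, hyn⟩ := st8_lift x
  have := hC y (by simpa [Metric.mem_closedBall, dist_zero_right] using hyn)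
  rw [hy] at this
  simpa [Real.norm_eq_abs] using this

lemma st8_projT_add_int (x m : V d) (hm : ∀ i, ∃ z : ℤ, m i = (z : ℝ)) :
    projT (x + m) = projT x := by
  funext i
  obtain ⟨z, hz⟩ := hm i
  show (((x + m) i : ℝ) : AddCircle (1:ℝ)) = ((x i : ℝ) : AddCircle (1:ℝ))
  have hxm : (x + m) i = x i + m i := rfl
  rw [hxm, hz, QuotientAddGroup.eq, AddSubgroup.mem_zmultiples_iff]
  exact ⟨-z, by push_cast [zsmul_eq_mul]; ring⟩

lemma st8_projT_sub_int {a a' : V d} (h : projT a = projT a') :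
    ∀ i, ∃ z : ℤ, (a - a') i = (z : ℝ) := by
  intro i
  have h2 : ((a i : ℝ) : AddCircle (1:ℝ)) = ((a' i : ℝ) : AddCircle (1:ℝ)) := congrFun h i
  rw [QuotientAddGroup.eq, AddSubgroup.mem_zmultiples_iff] at h2
  obtain ⟨k, hk⟩ := h2
  refine ⟨-k, ?_⟩
  have hsub : (a - a') i = a i - a' i := rfl
  rw [zsmul_eq_mul, mul_one] at hk
  rw [hsub]
  push_cast
  linarith

/-- The Lagrangian integrand is integrable for an AC curve. -/
lemma st8_integrand_int {ζ g : ℝ → V d} {s t : ℝ} (b : V d) (h : IsAC ζ g s t) :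
    IntegrableOn (fun τ => (1 : ℝ) / 2 * ‖g τ‖ ^ 2 - (inner ℝ b (g τ) : ℝ)) (Set.Icc s t) :=
  (h.2.1.const_mul ((1:ℝ)/2)).sub (h.1.const_inner b)

lemma st8_II {f : ℝ → ℝ} {s t a c : ℝ} (h : IntegrableOn f (Set.Icc s t))
    (ha : a ∈ Set.Icc s t) (hc : c ∈ Set.Icc s t) : IntervalIntegrable f volume a c :=
  (h.mono_set (Set.uIcc_subset_Icc ha hc)).intervalIntegrable

lemma st8_IIv {g : ℝ → V d} {s t a c : ℝ} (h : IntegrableOn g (Set.Icc s t))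
    (ha : a ∈ Set.Icc s t) (hc : c ∈ Set.Icc s t) : IntervalIntegrable g volume a c :=
  (h.mono_set (Set.uIcc_subset_Icc ha hc)).intervalIntegrable

/-- Restriction of an AC curve. -/
lemma st8_IsAC_mono {ζ g : ℝ → V d} {s t s' t' : ℝ} (h : IsAC ζ g s t)
    (hs : s ≤ s') (hs' : s' ≤ t') (ht' : t' ≤ t) : IsAC ζ g s' t' := by
  have hsub : Set.Icc s' t' ⊆ Set.Icc s t := Set.Icc_subset_Icc hs ht'
  refine ⟨h.1.mono_set hsub, h.2.1.mono_set hsub, fun τ hτ => ?_⟩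
  have hstt : s ≤ t := hs.trans (hs'.trans ht')
  have hτst : τ ∈ Set.Icc s t := hsub hτ
  have hs'st : s' ∈ Set.Icc s t := ⟨hs, hτ.1.trans (hτ.2.trans ht')⟩
  have h1 := h.2.2 τ hτst
  have h2 := h.2.2 s' hs'st
  have h3 : (∫ u in s..τ, g u) - ∫ u in s..s', g u = ∫ u in s'..τ, g u :=
    intervalIntegral.integral_interval_sub_left
      (st8_IIv h.1 ⟨le_refl s, hstt⟩ hτst)
      (st8_IIv h.1 ⟨le_refl s, hstt⟩ hs'st)
  rw [h1, h2]
  rw [← h3]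
  abel

/-- `action` at coinciding endpoints vanishes. -/
lemma st8_action_self (F : ℤ → Torus d → ℝ) (b : V d) (ζ g : ℝ → V d) (s : ℝ) :
    action F b ζ g s s = 0 := by
  simp [action]

/-- Additivity of the action. -/
lemma st8_action_split (F : ℤ → Torus d → ℝ) (b : V d) {ζ g : ℝ → V d} {s r t : ℝ}
    (h : IsAC ζ g s t) (hsr : s ≤ r) (hrt : r ≤ t) :
    action F b ζ g s t = action F b ζ g s r + action F b ζ g r t := by
  have hint := st8_integrand_int b h
  have hI : (∫ τ in s..r, ((1:ℝ)/2 * ‖g τ‖ ^ 2 - (inner ℝ b (g τ) : ℝ))) +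
      (∫ τ in r..t, ((1:ℝ)/2 * ‖g τ‖ ^ 2 - (inner ℝ b (g τ) : ℝ))) =
      ∫ τ in s..t, ((1:ℝ)/2 * ‖g τ‖ ^ 2 - (inner ℝ b (g τ) : ℝ)) :=
    intervalIntegral.integral_add_adjacent_intervals
      (st8_II hint ⟨le_refl s, hsr.trans hrt⟩ ⟨hsr, hrt⟩)
      (st8_II hint ⟨hsr, hrt⟩ ⟨hsr.trans hrt, le_refl t⟩)
  have hS : ∑ j ∈ Finset.Ico ⌈s⌉ ⌈r⌉, F j (projT (ζ (j : ℝ))) +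
      ∑ j ∈ Finset.Ico ⌈r⌉ ⌈t⌉, F j (projT (ζ (j : ℝ))) =
      ∑ j ∈ Finset.Ico ⌈s⌉ ⌈t⌉, F j (projT (ζ (j : ℝ))) := by
    rw [← Finset.Ico_union_Ico_eq_Ico (Int.ceil_le_ceil hsr) (Int.ceil_le_ceil hrt),
      Finset.sum_union (Finset.Ico_disjoint_Ico_consecutive _ _ _)]
  unfold action
  rw [← hI, ← hS]
  ring

/-- Lower bound for the action. -/
lemma st8_action_lb (F : ℤ → Torus d → ℝ) (b : V d) {M : ℤ → ℝ}
    (hM : ∀ j x, |F j x| ≤ M j) {ζ g : ℝ → V d} {s t : ℝ} (hst : s ≤ t)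
    (h : IsAC ζ g s t) :
    -((t - s) * (‖b‖ ^ 2 / 2)) - ∑ j ∈ Finset.Ico ⌈s⌉ ⌈t⌉, M j ≤ action F b ζ g s t := by
  have hint := st8_integrand_int b h
  have hII : IntervalIntegrable
      (fun τ => (1:ℝ)/2 * ‖g τ‖ ^ 2 - (inner ℝ b (g τ) : ℝ)) volume s t :=
    st8_II hint ⟨le_refl s, hst⟩ ⟨hst, le_refl t⟩
  have hIconst : IntervalIntegrable (fun _ : ℝ => -(‖b‖ ^ 2 / 2)) volume s t :=
    intervalIntegrable_const
  have hmono : (∫ _ in s..t, -(‖b‖ ^ 2 / 2)) ≤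
      ∫ τ in s..t, ((1:ℝ)/2 * ‖g τ‖ ^ 2 - (inner ℝ b (g τ) : ℝ)) := by
    apply intervalIntegral.integral_mono_on hst hIconst hII
    intro τ _
    have h1 : (inner ℝ b (g τ) : ℝ) ≤ ‖b‖ * ‖g τ‖ := real_inner_le_norm b (g τ)
    nlinarith [sq_nonneg (‖g τ‖ - ‖b‖)]
  have hconst : (∫ _ in s..t, -(‖b‖ ^ 2 / 2)) = -((t - s) * (‖b‖ ^ 2 / 2)) := by
    rw [intervalIntegral.integral_const, smul_eq_mul]; ring
  have hsum : ∑ j ∈ Finset.Ico ⌈s⌉ ⌈t⌉, F j (projT (ζ (j : ℝ))) ≤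
      ∑ j ∈ Finset.Ico ⌈s⌉ ⌈t⌉, M j :=
    Finset.sum_le_sum fun j _ => le_trans (le_abs_self _) (hM j _)
  unfold action
  rw [hconst] at hmono
  linarith

/-- The defining set of `actFn` is nonempty. -/
lemma st8_actFnSet_ne (F : ℤ → Torus d → ℝ) (b : V d) {s t : ℝ} (hst : s < t)
    (x x' : Torus d) :
    {a | ∃ ζ g : ℝ → V d, IsAC ζ g s t ∧ projT (ζ s) = x ∧ projT (ζ t) = x' ∧
      action F b ζ g s t = a}.Nonempty := by
  obtain ⟨y0, hy0, -⟩ := st8_lift x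
  obtain ⟨y1, hy1, -⟩ := st8_lift x'
  set c : V d := (t - s)⁻¹ • (y1 - y0) with hc
  have hts : t - s ≠ 0 := sub_ne_zero.2 (ne_of_gt hst)
  refine ⟨_, (fun τ => y0 + (τ - s) • c), (fun _ => c), ⟨?_, ?_, ?_⟩, ?_, ?_, rfl⟩
  · exact integrableOn_const measure_Icc_lt_top.ne
  · exact integrableOn_const measure_Icc_lt_top.ne
  · intro τ _
    rw [intervalIntegral.integral_const]
    simp
  · simpa using hy0
  · show projT (y0 + (t - s) • c) = x'
    have hcc : (t - s) • c = y1 - y0 := by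
      rw [hc, smul_smul, mul_inv_cancel₀ hts, one_smul]
    rw [hcc, add_sub_cancel]
    exact hy1

lemma st8_actFn_bddBelow (F : ℤ → Torus d → ℝ) (b : V d) {M : ℤ → ℝ}
    (hM : ∀ j x, |F j x| ≤ M j) {s t : ℝ} (hst : s ≤ t) (x x' : Torus d) :
    BddBelow {a | ∃ ζ g : ℝ → V d, IsAC ζ g s t ∧ projT (ζ s) = x ∧ projT (ζ t) = x' ∧
      action F b ζ g s t = a} := by
  refine ⟨-((t - s) * (‖b‖ ^ 2 / 2)) - ∑ j ∈ Finset.Ico ⌈s⌉ ⌈t⌉, M j, ?_⟩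
  rintro a ⟨ζ, g, h, -, -, rfl⟩
  exact st8_action_lb F b hM hst h

lemma st8_actFn_ge (F : ℤ → Torus d → ℝ) (b : V d) {M : ℤ → ℝ}
    (hM : ∀ j x, |F j x| ≤ M j) {s t : ℝ} (hst : s < t) (x x' : Torus d) :
    -((t - s) * (‖b‖ ^ 2 / 2)) - ∑ j ∈ Finset.Ico ⌈s⌉ ⌈t⌉, M j ≤ actFn F b s t x x' := by
  apply le_csInf (st8_actFnSet_ne F b hst x x')
  rintro a ⟨ζ, g, h, -, -, rfl⟩
  exact st8_action_lb F b hM hst.le h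

lemma st8_actFn_le (F : ℤ → Torus d → ℝ) (b : V d) {M : ℤ → ℝ}
    (hM : ∀ j x, |F j x| ≤ M j) {s t : ℝ} (hst : s ≤ t) {ζ g : ℝ → V d}
    (h : IsAC ζ g s t) :
    actFn F b s t (projT (ζ s)) (projT (ζ t)) ≤ action F b ζ g s t :=
  csInf_le (st8_actFn_bddBelow F b hM hst _ _) ⟨ζ, g, h, rfl, rfl, rfl⟩

end St8Aux

section St8Concat

variable {d : ℕ}

/-- Gluing of two curves, the second translated by `m`. -/
def st8Glue (ζ1 ζ2 : ℝ → V d) (r : ℝ) (m : V d) : ℝ → V d :=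
  fun τ => if τ < r then ζ1 τ else ζ2 τ + m

lemma st8Glue_lt {ζ1 ζ2 : ℝ → V d} {r τ : ℝ} (m : V d) (h : τ < r) :
    st8Glue ζ1 ζ2 r m τ = ζ1 τ := if_pos h

lemma st8Glue_ge {ζ1 ζ2 : ℝ → V d} {r τ : ℝ} (m : V d) (h : r ≤ τ) :
    st8Glue ζ1 ζ2 r m τ = ζ2 τ + m := if_neg (not_lt.2 h)

lemma st8_concat (F : ℤ → Torus d → ℝ) (b : V d) {s r t : ℝ} (hsr : s ≤ r) (hrt : r ≤ t)
    {ζ1 g1 ζ2 g2 : ℝ → V d} (h1 : IsAC ζ1 g1 s r) (h2 : IsAC ζ2 g2 r t)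
    (hm : projT (ζ1 r) = projT (ζ2 r)) :
    ∃ ζ3 g3 : ℝ → V d, IsAC ζ3 g3 s t ∧ ζ3 s = ζ1 s ∧ projT (ζ3 t) = projT (ζ2 t) ∧
      action F b ζ3 g3 s t = action F b ζ1 g1 s r + action F b ζ2 g2 r t := by
  classical
  set m : V d := ζ1 r - ζ2 r with hmdef
  have hmint : ∀ i, ∃ z : ℤ, m i = (z : ℝ) := st8_projT_sub_int hm
  set ζ3 : ℝ → V d := st8Glue ζ1 ζ2 r m with hζ3
  set g3 : ℝ → V d := st8Glue g1 g2 r 0 with hg3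
  have hg3lt : ∀ {τ : ℝ}, τ < r → g3 τ = g1 τ := fun h => st8Glue_lt 0 h
  have hg3ge : ∀ {τ : ℝ}, r ≤ τ → g3 τ = g2 τ := fun h => by
    rw [hg3, st8Glue_ge 0 h, add_zero]
  have hζ3lt : ∀ {τ : ℝ}, τ < r → ζ3 τ = ζ1 τ := fun h => st8Glue_lt m h
  have hζ3ge : ∀ {τ : ℝ}, r ≤ τ → ζ3 τ = ζ2 τ + m := fun h => st8Glue_ge m h
  have hζ3r : ζ3 r = ζ1 r := by
    rw [hζ3ge le_rfl, hmdef, add_sub_cancel]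
  have hζ3s : ζ3 s = ζ1 s := by
    rcases lt_or_eq_of_le hsr with h | h
    · exact hζ3lt h
    · rw [h]; exact hζ3r
  have hst : s ≤ t := hsr.trans hrt
  have hsmem : s ∈ Set.Icc s t := ⟨le_rfl, hst⟩
  have hrmem : r ∈ Set.Icc s t := ⟨hsr, hrt⟩
  have htmem : t ∈ Set.Icc s t := ⟨hst, le_rfl⟩
  have haes : ∀ᵐ (τ : ℝ) ∂(volume : Measure ℝ), τ ≠ r := by
    rw [ae_iff]
    simp only [not_not, Set.setOf_eq_eq_singleton]
    exact measure_singleton r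
  -- a.e. / pointwise identifications of g3
  have e1 : g3 =ᵐ[(volume : Measure ℝ).restrict (Set.Icc s r)] g1 := by
    filter_upwards [ae_restrict_of_ae haes, ae_restrict_mem measurableSet_Icc] with τ hne hmem
    exact hg3lt (lt_of_le_of_ne hmem.2 hne)
  have e2 : ∀ τ ∈ Set.Icc r t, g3 τ = g2 τ := fun τ hτ => hg3ge hτ.1
  have e2' : g3 =ᵐ[(volume : Measure ℝ).restrict (Set.Icc r t)] g2 := by
    filter_upwards [ae_restrict_mem measurableSet_Icc] with τ hτ
    exact e2 τ hτ
  have hg3sr : IntegrableOn g3 (Set.Icc s r) := h1.1.congr e1.symm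
  have hg3rt : IntegrableOn g3 (Set.Icc r t) := h2.1.congr e2'.symm
  have hg3int : IntegrableOn g3 (Set.Icc s t) :=
    (hg3sr.union hg3rt).mono_set Set.Icc_subset_Icc_union_Icc
  have hg3sq : IntegrableOn (fun τ => ‖g3 τ‖ ^ 2) (Set.Icc s t) := by
    have a1e : (fun τ => ‖g1 τ‖ ^ 2) =ᵐ[(volume : Measure ℝ).restrict (Set.Icc s r)]
        (fun τ => ‖g3 τ‖ ^ 2) := by
      filter_upwards [e1] with τ h
      rw [h]
    have a2e : (fun τ => ‖g2 τ‖ ^ 2) =ᵐ[(volume : Measure ℝ).restrict (Set.Icc r t)]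
        (fun τ => ‖g3 τ‖ ^ 2) := by
      filter_upwards [e2'] with τ h
      rw [h]
    have a1 : IntegrableOn (fun τ => ‖g3 τ‖ ^ 2) (Set.Icc s r) := h1.2.1.congr a1e
    have a2 : IntegrableOn (fun τ => ‖g3 τ‖ ^ 2) (Set.Icc r t) := h2.2.1.congr a2e
    exact (a1.union a2).mono_set Set.Icc_subset_Icc_union_Icc
  -- integrals of g3 agree with g1 / g2
  have hIsr : (∫ u in s..r, g3 u) = ∫ u in s..r, g1 u := by
    apply intervalIntegral.integral_congr_ae
    filter_upwards [haes] with x hne hx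
    rw [Set.uIoc_of_le hsr] at hx
    exact hg3lt (lt_of_le_of_ne hx.2 hne)
  -- the fundamental theorem for the glued curve
  have hFTC : ∀ τ ∈ Set.Icc s t, ζ3 τ = ζ3 s + ∫ u in s..τ, g3 u := by
    intro τ hτ
    by_cases hcase : τ < r
    · have h1τ := h1.2.2 τ ⟨hτ.1, hcase.le⟩
      have hIτ : (∫ u in s..τ, g3 u) = ∫ u in s..τ, g1 u := by
        apply intervalIntegral.integral_congr
        intro x hx
        rw [Set.uIcc_of_le hτ.1] at hx
        exact hg3lt (lt_of_le_of_lt hx.2 hcase)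
      calc ζ3 τ = ζ1 τ := hζ3lt hcase
        _ = ζ1 s + ∫ u in s..τ, g1 u := h1τ
        _ = ζ3 s + ∫ u in s..τ, g3 u := by rw [hζ3s, hIτ]
    · push_neg at hcase
      have h2τ := h2.2.2 τ ⟨hcase, hτ.2⟩
      have hIrτ : (∫ u in r..τ, g3 u) = ∫ u in r..τ, g2 u := by
        apply intervalIntegral.integral_congr
        intro x hx
        rw [Set.uIcc_of_le hcase] at hx
        exact hg3ge hx.1
      have hadd : (∫ u in s..r, g3 u) + ∫ u in r..τ, g3 u = ∫ u in s..τ, g3 u :=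
        intervalIntegral.integral_add_adjacent_intervals
          (st8_IIv hg3int hsmem hrmem) (st8_IIv hg3int hrmem hτ)
      have h1r := h1.2.2 r ⟨hsr, le_rfl⟩
      calc ζ3 τ = ζ2 τ + m := hζ3ge hcase
        _ = (ζ2 r + ∫ u in r..τ, g2 u) + m := by rw [← h2τ]
        _ = (ζ2 r + m) + ∫ u in r..τ, g3 u := by rw [hIrτ]; abel
        _ = ζ1 r + ∫ u in r..τ, g3 u := by rw [hmdef]; abel_nf
        _ = (ζ1 s + ∫ u in s..r, g1 u) + ∫ u in r..τ, g3 u := by rw [← h1r]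
        _ = ζ3 s + ((∫ u in s..r, g3 u) + ∫ u in r..τ, g3 u) := by
              rw [hζ3s, hIsr]; abel
        _ = ζ3 s + ∫ u in s..τ, g3 u := by rw [hadd]
  have hAC3 : IsAC ζ3 g3 s t := ⟨hg3int, hg3sq, hFTC⟩
  refine ⟨ζ3, g3, hAC3, hζ3s, ?_, ?_⟩
  · rw [hζ3ge hrt]
    exact st8_projT_add_int (ζ2 t) m hmint
  · -- action splits
    have hKint := st8_integrand_int b hAC3
    have hIK : (∫ τ in s..t, ((1:ℝ)/2 * ‖g3 τ‖ ^ 2 - (inner ℝ b (g3 τ) : ℝ))) =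
        (∫ τ in s..r, ((1:ℝ)/2 * ‖g1 τ‖ ^ 2 - (inner ℝ b (g1 τ) : ℝ))) +
        (∫ τ in r..t, ((1:ℝ)/2 * ‖g2 τ‖ ^ 2 - (inner ℝ b (g2 τ) : ℝ))) := by
      rw [← intervalIntegral.integral_add_adjacent_intervals
        (st8_II hKint hsmem hrmem) (st8_II hKint hrmem htmem)]
      congr 1
      · apply intervalIntegral.integral_congr_ae
        filter_upwards [haes] with x hne hx
        rw [Set.uIoc_of_le hsr] at hx
        simp only [hg3lt (lt_of_le_of_ne hx.2 hne)]
      · apply intervalIntegral.integral_congr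
        intro x hx
        rw [Set.uIcc_of_le hrt] at hx
        simp only [hg3ge hx.1]
    have hSum : ∑ j ∈ Finset.Ico ⌈s⌉ ⌈t⌉, F j (projT (ζ3 (j : ℝ))) =
        (∑ j ∈ Finset.Ico ⌈s⌉ ⌈r⌉, F j (projT (ζ1 (j : ℝ)))) +
        ∑ j ∈ Finset.Ico ⌈r⌉ ⌈t⌉, F j (projT (ζ2 (j : ℝ))) := by
      rw [← Finset.Ico_union_Ico_eq_Ico (Int.ceil_le_ceil hsr) (Int.ceil_le_ceil hrt),
        Finset.sum_union (Finset.Ico_disjoint_Ico_consecutive _ _ _)]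
      congr 1
      · apply Finset.sum_congr rfl
        intro i hi
        rw [Finset.mem_Ico] at hi
        have hi2 : (i : ℝ) < r := by
          have hle : (i : ℤ) + 1 ≤ ⌈r⌉ := hi.2
          have : ((i : ℝ) + 1) ≤ (⌈r⌉ : ℝ) := by exact_mod_cast hle
          have h2 := Int.ceil_lt_add_one r
          linarith
        rw [hζ3lt hi2]
      · apply Finset.sum_congr rfl
        intro i hi
        rw [Finset.mem_Ico] at hi
        have hi2 : r ≤ (i : ℝ) := le_trans (Int.le_ceil r) (by exact_mod_cast hi.1)
        rw [hζ3ge hi2, st8_projT_add_int (ζ2 (i:ℝ)) m hmint]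
    unfold action
    rw [hIK, hSum]
    ring

end St8Concat

section St8Ops

variable {d : ℕ}

lemma st8_KOp_le (F : ℤ → Torus d → ℝ) (b : V d) {M : ℤ → ℝ}
    (hM : ∀ j x, |F j x| ≤ M j) {Cφ : ℝ} {φ : Torus d → ℝ} (hφb : ∀ y, |φ y| ≤ Cφ)
    {s t : ℝ} (hst : s < t) (x y : Torus d) :
    KOp F b s t φ x ≤ φ y + actFn F b s t y x := by
  simp only [KOp]
  rw [if_pos hst]
  have hmem : φ y + actFn F b s t y x ∈
      {a | ∃ y' : Torus d, a = φ y' + actFn F b s t y' x} := ⟨y, rfl⟩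
  refine csInf_le ?_ hmem
  refine ⟨-Cφ + (-((t - s) * (‖b‖ ^ 2 / 2)) - ∑ j ∈ Finset.Ico ⌈s⌉ ⌈t⌉, M j), ?_⟩
  rintro a ⟨y', rfl⟩
  have h1 := st8_actFn_ge F b hM hst y' x
  have h2 := (abs_le.1 (hφb y')).1
  linarith

lemma st8_KChk_ge (F : ℤ → Torus d → ℝ) (b : V d) {M : ℤ → ℝ}
    (hM : ∀ j x, |F j x| ≤ M j) {Cψ : ℝ} {ψ : Torus d → ℝ} (hψb : ∀ y, |ψ y| ≤ Cψ)
    {s t : ℝ} (hst : s < t) (x y : Torus d) :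
    ψ y - actFn F b s t x y ≤ KChk F b s t ψ x := by
  simp only [KChk]
  rw [if_pos hst]
  have hmem : ψ y - actFn F b s t x y ∈
      {a | ∃ y' : Torus d, a = ψ y' - actFn F b s t x y'} := ⟨y, rfl⟩
  refine le_csSup ?_ hmem
  refine ⟨Cψ + ((t - s) * (‖b‖ ^ 2 / 2) + ∑ j ∈ Finset.Ico ⌈s⌉ ⌈t⌉, M j), ?_⟩
  rintro a ⟨y', rfl⟩
  have h1 := st8_actFn_ge F b hM hst x y'
  have h2 := (abs_le.1 (hψb y')).2
  linarith

end St8Ops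

theorem statement8 {d : ℕ} (F : ℤ → Torus d → ℝ)
    (hF : ∀ j : ℤ, ContDiff ℝ 2 fun x : V d => F j (projT x)) (b : V d)
    (ψp : Torus d → ℤ → ℝ) (hψp : IsForwardSol F b ψp)
    (N : ℕ) (φ : Torus d → ℝ) (hφ : Continuous φ)
    (ζ g : ℝ → V d) (hmin : IsMinimizer F b (-(N : ℤ)) 0 φ ζ g) :
    ∀ j k : ℤ, -(N : ℤ) ≤ j → j < k → k ≤ 0 →
      KOp F b (-(N : ℝ)) j φ (projT (ζ (j : ℝ))) - ψp (projT (ζ (j : ℝ))) j ≤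
        KOp F b (-(N : ℝ)) k φ (projT (ζ (k : ℝ))) - ψp (projT (ζ (k : ℝ))) k := by
  intro j k hj hjk hk
  -- bounds on the potentials and on φ, ψp
  have hFb : ∀ i : ℤ, ∃ Mi : ℝ, ∀ x : Torus d, |F i x| ≤ Mi :=
    fun i => st8_bound (hF i).continuous
  choose M hM using hFb
  obtain ⟨Cφ, hCφ⟩ : ∃ C : ℝ, ∀ x : Torus d, |φ x| ≤ C := by
    obtain ⟨C, hC⟩ := isCompact_univ.exists_bound_of_continuousOn
      (hφ.continuousOn (s := Set.univ))
    exact ⟨C, fun x => by simpa [Real.norm_eq_abs] using hC x (Set.mem_univ x)⟩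
  obtain ⟨Cψ, hCψ⟩ : ∃ C : ℝ, ∀ x : Torus d, |ψp x k| ≤ C := by
    obtain ⟨C, hC⟩ := isCompact_univ.exists_bound_of_continuousOn
      ((hψp.1 k).continuousOn (s := Set.univ))
    exact ⟨C, fun x => by simpa [Real.norm_eq_abs] using hC x (Set.mem_univ x)⟩
  -- basic real inequalities
  have hjk' : (j : ℝ) < (k : ℝ) := by exact_mod_cast hjk
  have hj' : -(N : ℝ) ≤ (j : ℝ) := by exact_mod_cast hj
  have hk' : (k : ℝ) ≤ 0 := by exact_mod_cast hk
  obtain ⟨hAC, hval⟩ := hmin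
  push_cast at hAC hval
  -- restriction of the minimizer
  have hACjk : IsAC ζ g (j : ℝ) (k : ℝ) :=
    st8_IsAC_mono hAC hj' hjk'.le hk'
  have hAjk_le : actFn F b j k (projT (ζ (j : ℝ))) (projT (ζ (k : ℝ))) ≤
      action F b ζ g j k := st8_actFn_le F b hM hjk'.le hACjk
  -- step (B): the forward solution decreases along the curve
  have hψ : ψp (projT (ζ (k : ℝ))) k - action F b ζ g j k ≤ ψp (projT (ζ (j : ℝ))) j := by
    have hdef := hψp.2 j k hjk (projT (ζ (j : ℝ)))
    have h2 := st8_KChk_ge F b hM hCψ hjk' (projT (ζ (j : ℝ))) (projT (ζ (k : ℝ)))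
    rw [hdef] at h2
    linarith
  -- splitting of the action
  have hsplit : action F b ζ g (-(N : ℝ)) 0 =
      action F b ζ g (-(N : ℝ)) j + action F b ζ g j k + action F b ζ g k 0 := by
    have h1 : action F b ζ g (-(N : ℝ)) 0 =
        action F b ζ g (-(N : ℝ)) j + action F b ζ g j 0 :=
      st8_action_split F b hAC hj' (hjk'.le.trans hk')
    have h2 : action F b ζ g (j : ℝ) 0 = action F b ζ g j k + action F b ζ g k 0 :=
      st8_action_split F b (st8_IsAC_mono hAC hj' (hjk'.le.trans hk') le_rfl) hjk'.le hk'
    rw [h1, h2, add_assoc]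
  -- step 1 : value at time j
  have hstep1 : KOp F b (-(N : ℝ)) j φ (projT (ζ (j : ℝ))) ≤
      φ (projT (ζ (-(N : ℝ)))) + action F b ζ g (-(N : ℝ)) j := by
    rcases lt_or_eq_of_le hj' with h | h
    · have hle := st8_KOp_le F b hM hCφ h (projT (ζ (j : ℝ))) (projT (ζ (-(N : ℝ))))
      have hres : IsAC ζ g (-(N : ℝ)) (j : ℝ) :=
        st8_IsAC_mono hAC le_rfl h.le (hjk'.le.trans hk')
      have := st8_actFn_le F b hM h.le hres
      linarith
    · rw [KOp, if_neg (by rw [h]; exact lt_irrefl _), ← h, st8_action_self, add_zero]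
  -- step 2 : value at time 0 versus value at time k
  have hstep2 : KOp F b (-(N : ℝ)) 0 φ (projT (ζ (0 : ℝ))) ≤
      KOp F b (-(N : ℝ)) k φ (projT (ζ (k : ℝ))) + action F b ζ g k 0 := by
    rcases lt_or_eq_of_le hk' with hk0 | hk0
    · -- k < 0
      have hs0k : -(N : ℝ) < (k : ℝ) := lt_of_le_of_lt hj' hjk'
      have hs00 : -(N : ℝ) < 0 := lt_of_lt_of_le (lt_of_le_of_lt hj' hjk') hk0.le
      have hKdef : KOp F b (-(N : ℝ)) k φ (projT (ζ (k : ℝ))) =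
          sInf {a | ∃ y : Torus d, a = φ y + actFn F b (-(N : ℝ)) k y (projT (ζ (k : ℝ)))} := by
        simp only [KOp]
        rw [if_pos hs0k]
      refine le_of_forall_pos_le_add fun ε hε => ?_
      have hS_ne : {a | ∃ y : Torus d,
          a = φ y + actFn F b (-(N : ℝ)) k y (projT (ζ (k : ℝ)))}.Nonempty :=
        ⟨_, projT (0 : V d), rfl⟩
      have hlt : sInf {a | ∃ y : Torus d,
          a = φ y + actFn F b (-(N : ℝ)) k y (projT (ζ (k : ℝ)))} <
          KOp F b (-(N : ℝ)) k φ (projT (ζ (k : ℝ))) + ε / 2 := by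
        rw [← hKdef]
        linarith
      obtain ⟨a, ⟨y, rfl⟩, ha⟩ := exists_lt_of_csInf_lt hS_ne hlt
      have hT_ne := st8_actFnSet_ne F b hs0k y (projT (ζ (k : ℝ)))
      obtain ⟨a2, ⟨ζ1, g1, hAC1, hy1, hk1, rfl⟩, ha2⟩ :=
        exists_lt_of_csInf_lt hT_ne
          (lt_add_of_pos_right (actFn F b (-(N : ℝ)) k y (projT (ζ (k : ℝ)))) (half_pos hε))
      have hACk0 : IsAC ζ g (k : ℝ) 0 := st8_IsAC_mono hAC hs0k.le hk0.le le_rfl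
      obtain ⟨ζ3, g3, hAC3, hs3, ht3, hact3⟩ :=
        st8_concat F b hs0k.le hk0.le hAC1 hACk0 hk1
      have hKle := st8_KOp_le F b hM hCφ hs00 (projT (ζ (0 : ℝ))) (projT (ζ3 (-(N : ℝ))))
      have hle2 : actFn F b (-(N : ℝ)) 0 (projT (ζ3 (-(N : ℝ)))) (projT (ζ (0 : ℝ))) ≤
          action F b ζ3 g3 (-(N : ℝ)) 0 := by
        have := st8_actFn_le F b hM hs00.le hAC3
        rwa [ht3] at this
      have hy3 : projT (ζ3 (-(N : ℝ))) = y := by rw [hs3]; exact hy1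
      rw [hy3] at hKle hle2
      rw [hact3] at hle2
      linarith
    · -- k = 0
      rw [show ((k : ℝ)) = 0 from hk0, st8_action_self, add_zero]
  -- combine
  have hcomb : KOp F b (-(N : ℝ)) j φ (projT (ζ (j : ℝ))) + action F b ζ g j k ≤
      KOp F b (-(N : ℝ)) k φ (projT (ζ (k : ℝ))) := by
    rw [hval, hsplit] at hstep2
    linarith
  linarith
end
end

section
/- Let ψ⁺ be a forward stationary solution, N ∈ ℕ, φ ∈ C(𝕋^d), and Q^N(x, n) = K_{−N,n}φ(x) − ψ⁺(x, n) for integers −N ≤ n ≤ 0 (with K_{−N,−N}φ = φ). Let z_{−N} be a minimizer of Q^N(·, −N), and let z : [−N, ∞) → 𝕋^d be a forward minimizer for ψ⁺ starting at z_{−N}: an absolutely continuous curve with z(−N) = z_{−N}, each compact restriction of which attains the action function between its endpoints, such that ψ⁺(z(−N), −N) = ψ⁺(z(n), n) − A_{−N,n}(z(−N), z(n)) for every integer n > −N. Then: (1) z(n) minimizes Q^N(·, n) for every integer −N ≤ n ≤ 0; (2) Q^N(z(j), j) = Q^N(z(k), k) for all integers −N ≤ j < k ≤ 0; (3) the restriction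 of z to [−N, 0] is a minimizer for K_{−N,0}φ at z(0). -/
open MeasureTheory

noncomputable section

section AuxLemmas
variable {d : ℕ}

lemma intCast_addCircle (n : ℤ) : (((n : ℝ)) : AddCircle (1:ℝ)) = 0 := by
  rw [AddCircle.coe_eq_zero_iff]
  exact ⟨n, by simp⟩

lemma exists_lift (x : Torus d) : ∃ v : V d, projT v = x := by
  have h : ∀ i, ∃ r : ℝ, (r : AddCircle (1:ℝ)) = x i := fun i =>
    QuotientAddGroup.mk_surjective (x i)
  choose v hv using h
  exact ⟨(EuclideanSpace.equiv (Fin d) ℝ).symm v, funext fun i => hv i⟩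

lemma exists_ub_torus (f : Torus d → ℝ) (hf : Continuous f) : ∃ C, ∀ x, f x ≤ C := by
  obtain ⟨x0, -, hx0⟩ := isCompact_univ.exists_isMaxOn Set.univ_nonempty hf.continuousOn
  exact ⟨f x0, fun x => hx0 (Set.mem_univ x)⟩

lemma exists_lb_torus (f : Torus d → ℝ) (hf : Continuous f) : ∃ C, ∀ x, C ≤ f x := by
  obtain ⟨x0, -, hx0⟩ := isCompact_univ.exists_isMinOn Set.univ_nonempty hf.continuousOn
  exact ⟨f x0, fun x => hx0 (Set.mem_univ x)⟩

lemma exists_ub_proj (f : Torus d → ℝ) (hf : Continuous fun v : V d => f (projT v)) :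
    ∃ C, ∀ v : V d, f (projT v) ≤ C := by
  set e := EuclideanSpace.equiv (Fin d) ℝ with he
  set K : Set (Fin d → ℝ) := Set.univ.pi fun _ => Set.Icc (0:ℝ) 1 with hKdef
  have hKc : IsCompact K := isCompact_univ_pi fun _ => isCompact_Icc
  have hK : IsCompact (⇑e ⁻¹' K) := e.toHomeomorph.isCompact_preimage.mpr hKc
  have hne : (⇑e ⁻¹' K).Nonempty := ⟨e.symm fun _ => 0, by
    simp only [Set.mem_preimage, ContinuousLinearEquiv.apply_symm_apply, hKdef, Set.mem_pi,
      Set.mem_univ, forall_true_left, Set.mem_Icc]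
    intro i; exact ⟨le_rfl, zero_le_one⟩⟩
  obtain ⟨v0, -, hv0⟩ := hK.exists_isMaxOn hne hf.continuousOn
  refine ⟨f (projT v0), fun v => ?_⟩
  have h1 : projT (e.symm fun i => Int.fract (v i)) = projT v := by
    funext i
    show ((Int.fract (v i) : ℝ) : AddCircle (1:ℝ)) = (v i : AddCircle (1:ℝ))
    have hv : (v i : ℝ) = Int.fract (v i) + (⌊v i⌋ : ℝ) := by
      rw [add_comm]; exact (Int.floor_add_fract (v i)).symm
    conv_rhs => rw [hv]
    rw [AddCircle.coe_add, intCast_addCircle, add_zero]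
  have h2 : e.symm (fun i => Int.fract (v i)) ∈ ⇑e ⁻¹' K := by
    simp only [Set.mem_preimage, ContinuousLinearEquiv.apply_symm_apply, hKdef, Set.mem_pi,
      Set.mem_univ, forall_true_left, Set.mem_Icc]
    intro i
    exact ⟨Int.fract_nonneg (v i), (Int.fract_lt_one (v i)).le⟩
  calc f (projT v) = f (projT (e.symm fun i => Int.fract (v i))) := by rw [h1]
    _ ≤ f (projT v0) := hv0 h2

lemma straight (F : ℤ → Torus d → ℝ) (b : V d) {s t : ℝ} (hst : s < t) (x y : Torus d) :
    ∃ ζ g : ℝ → V d, IsAC ζ g s t ∧ projT (ζ s) = x ∧ projT (ζ t) = y := by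
  obtain ⟨xb, hxb⟩ := exists_lift x
  obtain ⟨yb, hyb⟩ := exists_lift y
  have hts : t - s ≠ 0 := sub_ne_zero.mpr hst.ne'
  refine ⟨fun τ => xb + ((τ - s) / (t - s)) • (yb - xb),
    fun _ => (t - s)⁻¹ • (yb - xb), ⟨?_, ?_, ?_⟩, ?_, ?_⟩
  · exact integrableOn_const measure_Icc_lt_top.ne
  · exact integrableOn_const measure_Icc_lt_top.ne
  · intro τ hτ
    rw [intervalIntegral.integral_const, smul_smul]
    simp only [sub_self, zero_div, zero_smul, add_zero, div_eq_mul_inv, zero_mul]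
  · simp [hxb]
  · show projT (xb + ((t - s) / (t - s)) • (yb - xb)) = y
    rw [div_self hts, one_smul, add_sub_cancel, hyb]

lemma action_lb (F : ℤ → Torus d → ℝ) (CF : ℤ → ℝ)
    (hCF : ∀ (j : ℤ) (v : V d), F j (projT v) ≤ CF j) (b : V d) {s t : ℝ} (hst : s ≤ t)
    {ζ g : ℝ → V d} (h : IsAC ζ g s t) :
    -((t - s) * (‖b‖ ^ 2 / 2)) - (∑ j ∈ Finset.Ico ⌈s⌉ ⌈t⌉, CF j) ≤ action F b ζ g s t := by
  have huIcc : Set.uIcc s t = Set.Icc s t := Set.uIcc_of_le hst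
  have hg2 : IntervalIntegrable (fun τ => ‖g τ‖ ^ 2) volume s t := by
    apply IntegrableOn.intervalIntegrable
    rw [huIcc]; exact h.2.1
  have hinner : IntervalIntegrable (fun τ => (inner ℝ b (g τ) : ℝ)) volume s t := by
    apply IntegrableOn.intervalIntegrable
    rw [huIcc]
    exact ContinuousLinearMap.integrable_comp (innerSL ℝ b) h.1
  have hf : IntervalIntegrable
      (fun τ => (1 : ℝ) / 2 * ‖g τ‖ ^ 2 - (inner ℝ b (g τ) : ℝ)) volume s t :=
    (hg2.const_mul ((1:ℝ)/2)).sub hinner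
  have hpt : ∀ τ ∈ Set.Icc s t,
      -(‖b‖ ^ 2 / 2) ≤ (1 : ℝ) / 2 * ‖g τ‖ ^ 2 - (inner ℝ b (g τ) : ℝ) := by
    intro τ _
    have h1 : (inner ℝ b (g τ) : ℝ) ≤ ‖b‖ * ‖g τ‖ := real_inner_le_norm b (g τ)
    nlinarith [sq_nonneg (‖b‖ - ‖g τ‖), norm_nonneg b, norm_nonneg (g τ)]
  have hint : ∫ τ in s..t, (-(‖b‖ ^ 2 / 2)) ≤
      ∫ τ in s..t, ((1 : ℝ) / 2 * ‖g τ‖ ^ 2 - (inner ℝ b (g τ) : ℝ)) :=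
    intervalIntegral.integral_mono_on hst intervalIntegrable_const hf hpt
  rw [intervalIntegral.integral_const, smul_eq_mul] at hint
  have hsum : ∑ j ∈ Finset.Ico ⌈s⌉ ⌈t⌉, F j (projT (ζ (j : ℝ))) ≤
      ∑ j ∈ Finset.Ico ⌈s⌉ ⌈t⌉, CF j :=
    Finset.sum_le_sum fun j _ => hCF j (ζ (j : ℝ))
  unfold action
  have hrw : (t - s) * -(‖b‖ ^ 2 / 2) = -((t - s) * (‖b‖ ^ 2 / 2)) := by ring
  linarith [hrw ▸ hint]

end AuxLemmas

theorem statement9 {d : ℕ} (F : ℤ → Torus d → ℝ)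
    (hF : ∀ j : ℤ, ContDiff ℝ 2 fun x : V d => F j (projT x)) (b : V d)
    (ψp : Torus d → ℤ → ℝ) (hψp : IsForwardSol F b ψp)
    (N : ℕ) (φ : Torus d → ℝ) (hφ : Continuous φ)
    (ζ g : ℝ → V d)
    -- z(−N) minimizes Q^N(·, −N), where Q^N(·,−N) = φ − ψ⁺(·,−N):
    (hz0 : ∀ x : Torus d,
      φ (projT (ζ (-(N : ℝ)))) - ψp (projT (ζ (-(N : ℝ)))) (-(N : ℤ)) ≤
        φ x - ψp x (-(N : ℤ)))
    -- z is absolutely continuous on [−N, ∞) and each compact restriction attains the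
    -- action function between its endpoints:
    (hattain : ∀ a c : ℝ, -(N : ℝ) ≤ a → a < c → IsAC ζ g a c ∧
      action F b ζ g a c = actFn F b a c (projT (ζ a)) (projT (ζ c)))
    -- z is a forward minimizer for ψ⁺:
    (hfwd : ∀ n : ℤ, -(N : ℤ) < n →
      ψp (projT (ζ (-(N : ℝ)))) (-(N : ℤ)) =
        ψp (projT (ζ (n : ℝ))) n -
          actFn F b (-(N : ℝ)) n (projT (ζ (-(N : ℝ)))) (projT (ζ (n : ℝ)))) :
    (∀ n : ℤ, -(N : ℤ) ≤ n → n ≤ 0 → ∀ x : Torus d,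
      KOp F b (-(N : ℝ)) n φ (projT (ζ (n : ℝ))) - ψp (projT (ζ (n : ℝ))) n ≤
        KOp F b (-(N : ℝ)) n φ x - ψp x n) ∧
    (∀ j k : ℤ, -(N : ℤ) ≤ j → j < k → k ≤ 0 →
      KOp F b (-(N : ℝ)) j φ (projT (ζ (j : ℝ))) - ψp (projT (ζ (j : ℝ))) j =
        KOp F b (-(N : ℝ)) k φ (projT (ζ (k : ℝ))) - ψp (projT (ζ (k : ℝ))) k) ∧
    IsMinimizer F b (-(N : ℤ)) 0 φ ζ g := by
  classical
  choose CF hCF using fun j => exists_ub_proj (F j) ((hF j).continuous)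
  choose Cψ hCψ using fun k => exists_ub_torus (fun y => ψp y k) (hψp.1 k)
  obtain ⟨cφ, hcφ⟩ := exists_lb_torus φ hφ
  have hc : ((-(N : ℤ) : ℤ) : ℝ) = -(N : ℝ) := by push_cast; ring
  have hactFn_lb : ∀ s t : ℝ, s < t → ∀ x y : Torus d,
      -((t - s) * (‖b‖ ^ 2 / 2)) - (∑ j ∈ Finset.Ico ⌈s⌉ ⌈t⌉, CF j) ≤ actFn F b s t x y := by
    intro s t hst x y
    apply le_csInf
    · obtain ⟨ζ', g', hAC, hx, hy⟩ := straight F b hst x y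
      exact ⟨action F b ζ' g' s t, ζ', g', hAC, hx, hy, rfl⟩
    · rintro a ⟨ζ', g', hAC, -, -, rfl⟩
      exact action_lb F CF hCF b hst.le hAC
  have hP1 : ∀ j k : ℤ, j < k → ∀ x y : Torus d,
      ψp y k - ψp x j ≤ actFn F b (j : ℝ) (k : ℝ) x y := by
    intro j k hjk x y
    have hjk' : (j : ℝ) < (k : ℝ) := by exact_mod_cast hjk
    have hst := hψp.2 j k hjk x
    rw [KChk, if_pos hjk'] at hst
    have hbdd : BddAbove {a | ∃ y', a = ψp y' k - actFn F b (j:ℝ) (k:ℝ) x y'} := by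
      refine ⟨Cψ k - (-(((k:ℝ) - (j:ℝ)) * (‖b‖ ^ 2 / 2)) -
        (∑ i ∈ Finset.Ico ⌈(j:ℝ)⌉ ⌈(k:ℝ)⌉, CF i)), ?_⟩
      rintro a ⟨y', rfl⟩
      have h1 := hactFn_lb (j:ℝ) (k:ℝ) hjk' x y'
      have h2 := hCψ k y'
      linarith
    have hmem : ψp y k - actFn F b (j:ℝ) (k:ℝ) x y ∈
        {a | ∃ y', a = ψp y' k - actFn F b (j:ℝ) (k:ℝ) x y'} := ⟨y, rfl⟩
    have hle := le_csSup hbdd hmem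
    rw [hst] at hle
    linarith
  have hKle : ∀ n : ℤ, -(N:ℝ) < (n:ℝ) → ∀ x y : Torus d,
      KOp F b (-(N:ℝ)) (n:ℝ) φ x ≤ φ y + actFn F b (-(N:ℝ)) (n:ℝ) y x := by
    intro n hn x y
    rw [KOp, if_pos hn]
    apply csInf_le
    · refine ⟨cφ + (-(((n:ℝ) - (-(N:ℝ))) * (‖b‖ ^ 2 / 2)) -
        (∑ i ∈ Finset.Ico ⌈-(N:ℝ)⌉ ⌈(n:ℝ)⌉, CF i)), ?_⟩
      rintro a ⟨y', rfl⟩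
      have h1 := hactFn_lb (-(N:ℝ)) (n:ℝ) hn y' x
      have h2 := hcφ y'
      linarith
    · exact ⟨y, rfl⟩
  have hKge : ∀ n : ℤ, -(N:ℝ) < (n:ℝ) → ∀ (x : Torus d) (c : ℝ),
      (∀ y : Torus d, c ≤ φ y + actFn F b (-(N:ℝ)) (n:ℝ) y x) →
      c ≤ KOp F b (-(N:ℝ)) (n:ℝ) φ x := by
    intro n hn x c hcy
    rw [KOp, if_pos hn]
    obtain ⟨y0⟩ : Nonempty (Torus d) := inferInstance
    refine le_csInf ⟨φ y0 + actFn F b (-(N:ℝ)) (n:ℝ) y0 x, y0, rfl⟩ ?_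
    rintro a ⟨y', rfl⟩
    exact hcy y'
  have hQm_le : ∀ n : ℤ, -(N:ℤ) < n → ∀ x : Torus d,
      φ (projT (ζ (-(N:ℝ)))) - ψp (projT (ζ (-(N:ℝ)))) (-(N:ℤ)) ≤
        KOp F b (-(N:ℝ)) (n:ℝ) φ x - ψp x n := by
    intro n hn x
    have hnR : -(N:ℝ) < (n:ℝ) := by rw [← hc]; exact_mod_cast hn
    have hkey := hKge n hnR x
      (φ (projT (ζ (-(N:ℝ)))) - ψp (projT (ζ (-(N:ℝ)))) (-(N:ℤ)) + ψp x n) ?_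
    · linarith
    · intro y
      have h1 := hz0 y
      have h2 := hP1 (-(N:ℤ)) n hn y x
      rw [hc] at h2
      linarith
  have hQeq : ∀ n : ℤ, -(N:ℤ) < n →
      KOp F b (-(N:ℝ)) (n:ℝ) φ (projT (ζ (n:ℝ))) - ψp (projT (ζ (n:ℝ))) n =
        φ (projT (ζ (-(N:ℝ)))) - ψp (projT (ζ (-(N:ℝ)))) (-(N:ℤ)) := by
    intro n hn
    have hnR : -(N:ℝ) < (n:ℝ) := by rw [← hc]; exact_mod_cast hn
    refine le_antisymm ?_ (hQm_le n hn _)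
    have h1 := hKle n hnR (projT (ζ (n:ℝ))) (projT (ζ (-(N:ℝ))))
    have h2 := hfwd n hn
    linarith
  refine ⟨?_, ?_, ?_⟩
  · intro n hn1 hn2 x
    rcases hn1.eq_or_lt with he | hlt
    · subst he
      rw [hc, KOp, if_neg (lt_irrefl _)]
      exact hz0 x
    · have h1 := hQeq n hlt
      have h2 := hQm_le n hlt x
      linarith
  · intro j k hj hjk hk
    rcases hj.eq_or_lt with he | hlt
    · subst he
      rw [hc, KOp, if_neg (lt_irrefl _)]
      exact (hQeq k hjk).symm
    · exact (hQeq j hlt).trans (hQeq k (hlt.trans hjk)).symm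
  · rcases Nat.eq_zero_or_pos N with hN | hN
    · subst hN
      have hz : ((-(0:ℕ) : ℤ) : ℝ) = (0:ℝ) := by norm_num
      refine ⟨⟨?_, ?_, ?_⟩, ?_⟩
      · rw [hz]
        norm_num [Set.Icc_self]
      · rw [hz]
        norm_num [Set.Icc_self]
      · rw [hz]
        norm_num [Set.Icc_self]
      · rw [hz]
        norm_num [KOp, action]
    · have hm0 : -(N:ℤ) < 0 := by omega
      have hNR : -(N:ℝ) < ((0:ℤ):ℝ) := by
        push_cast; exact neg_neg_iff_pos.mpr (by exact_mod_cast hN)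
      refine ⟨?_, ?_⟩
      · have h := (hattain (-(N:ℝ)) ((0:ℤ):ℝ) le_rfl hNR).1
        rw [hc]
        exact h
      · have h2 := (hattain (-(N:ℝ)) ((0:ℤ):ℝ) le_rfl hNR).2
        have h3 := hfwd 0 hm0
        have h4 := hQeq 0 hm0
        rw [hc]
        linarith
end
end

section
/- Let (Ω, ℱ, P) be a probability space, let θ : Ω → Ω be an invertible ergodic measure-preserving transformation, and let E ∈ ℱ satisfy P(E) > 1 − α for some α ∈ (0, 1). Then for every β with α < β < 1, for P-almost every ω there exists N₀(ω) such that for every integer N ≥ N₀(ω), every set of at least βN consecutive integers contained in [−N, 0] contains an integer n with θ^n ω ∈ E. -/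
open MeasureTheory Filter

section MaxS
variable {Ω : Type*} [MeasurableSpace Ω] (T : Ω → Ω) (f : Ω → ℝ)

noncomputable def maxS : ℕ → Ω → ℝ
  | 0 => fun _ => 0
  | (N+1) => fun ω => max 0 (f ω + maxS N (T ω))

lemma maxS_nonneg : ∀ N ω, 0 ≤ maxS T f N ω
  | 0, ω => le_refl 0
  | (N+1), ω => le_max_left _ _

lemma maxS_mono : ∀ N ω, maxS T f N ω ≤ maxS T f (N+1) ω
  | 0, ω => maxS_nonneg T f 1 ω
  | (N+1), ω => max_le_max le_rfl (add_le_add le_rfl (maxS_mono N (T ω)))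

lemma birkhoffSum_le_maxS : ∀ N n ω, n ≤ N → birkhoffSum T f n ω ≤ maxS T f N ω
  | N, 0, ω, _ => by rw [birkhoffSum_zero]; exact maxS_nonneg T f N ω
  | 0, (n+1), ω, h => absurd h (Nat.not_succ_le_zero n)
  | (N+1), (n+1), ω, h => by
      rw [birkhoffSum_succ']
      calc f ω + birkhoffSum T f n (T ω) ≤ f ω + maxS T f N (T ω) := by
            gcongr; exact birkhoffSum_le_maxS N n (T ω) (Nat.succ_le_succ_iff.mp h)
        _ ≤ maxS T f (N+1) ω := le_max_right _ _

lemma maxS_pos_exists : ∀ N ω, 0 < maxS T f N ω →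
    ∃ n, 1 ≤ n ∧ n ≤ N ∧ birkhoffSum T f n ω = maxS T f N ω
  | 0, ω, h => absurd h (lt_irrefl 0)
  | (N+1), ω, h => by
      have h2 : 0 < f ω + maxS T f N (T ω) := by
        by_contra hc
        push_neg at hc
        have : maxS T f (N+1) ω = 0 := max_eq_left hc
        rw [this] at h; exact lt_irrefl 0 h
      have heq : maxS T f (N+1) ω = f ω + maxS T f N (T ω) := max_eq_right h2.le
      rcases eq_or_lt_of_le (maxS_nonneg T f N (T ω)) with h0 | h0
      · exact ⟨1, le_rfl, Nat.one_le_iff_ne_zero.mpr (Nat.succ_ne_zero N),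
          by rw [birkhoffSum_one, heq, ← h0, add_zero]⟩
      · obtain ⟨n, hn1, hnN, hval⟩ := maxS_pos_exists N (T ω) h0
        exact ⟨n + 1, Nat.le_add_left 1 n, Nat.succ_le_succ hnN,
          by rw [birkhoffSum_succ', hval, heq]⟩

lemma maxS_le : ∀ N ω, (∀ x, |f x| ≤ 1) → maxS T f N ω ≤ N
  | 0, ω, _ => by simp [maxS]
  | (N+1), ω, hb => by
      have := maxS_le N (T ω) hb
      have hf := (abs_le.mp (hb ω)).2
      have : f ω + maxS T f N (T ω) ≤ (N:ℝ) + 1 := by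
        have := maxS_le N (T ω) hb; linarith
      simp only [maxS]
      push_cast
      exact max_le (by positivity) (by linarith)

lemma maxS_measurable (hT : Measurable T) (hf : Measurable f) : ∀ N, Measurable (maxS T f N)
  | 0 => measurable_const
  | (N+1) => measurable_const.max (hf.add ((maxS_measurable hT hf N).comp hT))


lemma measurable_birkhoffSum (hT : Measurable T) (hf : Measurable f) :
    ∀ n, Measurable (fun x => birkhoffSum T f n x)
  | 0 => by simp [birkhoffSum_zero]
  | (n+1) => by
      simp only [birkhoffSum_succ]
      exact (measurable_birkhoffSum hT hf n).add (hf.comp (hT.iterate n))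

end MaxS

lemma maximal_ergodic {Ω : Type*} [MeasurableSpace Ω] (P : Measure Ω) [IsProbabilityMeasure P]
    (T : Ω → Ω) (hT : Measurable T) (hTe : MeasurableEmbedding T)
    (hTP : MeasurePreserving T P P)
    (f : Ω → ℝ) (hf : Measurable f) (hb : ∀ x, |f x| ≤ 1) :
    0 ≤ ∫ ω in {x | ∃ n : ℕ, 0 < birkhoffSum T f (n+1) x}, f ω ∂P := by
  set A : Set Ω := {x | ∃ n : ℕ, 0 < birkhoffSum T f (n+1) x} with hA_def
  have hA : MeasurableSet A := by
    have : A = ⋃ n : ℕ, {x | 0 < birkhoffSum T f (n+1) x} := by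
      ext x; simp [hA_def]
    rw [this]
    exact MeasurableSet.iUnion fun n =>
      measurableSet_lt measurable_const (measurable_birkhoffSum T f hT hf (n+1))
  set G : ℕ → Set Ω := fun N => {x | 0 < maxS T f N x} with hG_def
  have hGm : ∀ N, MeasurableSet (G N) := fun N =>
    measurableSet_lt measurable_const (maxS_measurable T f hT hf N)
  have hint : ∀ N, Integrable (maxS T f N) P := by
    intro N
    refine (integrable_const (N:ℝ)).mono' (maxS_measurable T f hT hf N).aestronglyMeasurable ?_
    filter_upwards with ω
    rw [Real.norm_eq_abs, abs_of_nonneg (maxS_nonneg T f N ω)]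
    exact maxS_le T f N ω hb
  have hintT : ∀ N, Integrable (fun ω => maxS T f N (T ω)) P := by
    intro N
    refine (integrable_const (N:ℝ)).mono'
      ((maxS_measurable T f hT hf N).comp hT).aestronglyMeasurable ?_
    filter_upwards with ω
    rw [Real.norm_eq_abs, abs_of_nonneg (maxS_nonneg T f N (T ω))]
    exact maxS_le T f N (T ω) hb
  have hindint : ∀ N, Integrable (Set.indicator (G N) f) P := by
    intro N
    refine (integrable_const (1:ℝ)).mono'
      (hf.indicator (hGm N)).aestronglyMeasurable ?_
    filter_upwards with ω
    rw [Real.norm_eq_abs]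
    rcases Set.indicator_eq_zero_or_self (G N) f ω with h | h <;> rw [h] <;>
      simp [abs_nonneg, hb ω]
  -- key inequality
  have key : ∀ N : ℕ, 0 ≤ ∫ ω, Set.indicator (G (N+1)) f ω ∂P := by
    intro N
    have h1 : ∀ ω, maxS T f (N+1) ω - maxS T f N (T ω) ≤ Set.indicator (G (N+1)) f ω := by
      intro ω
      by_cases hω : ω ∈ G (N+1)
      · rw [Set.indicator_of_mem hω]
        have hpos : 0 < maxS T f (N+1) ω := hω
        have h2 : 0 < f ω + maxS T f N (T ω) := by
          by_contra hc
          push_neg at hc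
          have : maxS T f (N+1) ω = 0 := max_eq_left hc
          rw [this] at hpos; exact lt_irrefl 0 hpos
        have heq : maxS T f (N+1) ω = f ω + maxS T f N (T ω) := max_eq_right h2.le
        linarith
      · rw [Set.indicator_of_notMem hω]
        have h0 : maxS T f (N+1) ω ≤ 0 := not_lt.mp hω
        have := maxS_nonneg T f N (T ω)
        linarith
    have h2 : Integrable (fun ω => maxS T f (N+1) ω - maxS T f N (T ω)) P :=
      (hint (N+1)).sub (hintT N)
    have h3 : ∫ ω, (maxS T f (N+1) ω - maxS T f N (T ω)) ∂P ≤
        ∫ ω, Set.indicator (G (N+1)) f ω ∂P :=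
      integral_mono h2 (hindint (N+1)) h1
    rw [integral_sub (hint (N+1)) (hintT N)] at h3
    have h4 : ∫ ω, maxS T f N (T ω) ∂P = ∫ ω, maxS T f N ω ∂P :=
      hTP.integral_comp hTe _
    have h5 : ∫ ω, maxS T f N ω ∂P ≤ ∫ ω, maxS T f (N+1) ω ∂P :=
      integral_mono (hint N) (hint (N+1)) (fun ω => maxS_mono T f N ω)
    linarith
  -- dominated convergence
  have hlim : Tendsto (fun N => ∫ ω, Set.indicator (G N) f ω ∂P) atTop
      (nhds (∫ ω, Set.indicator A f ω ∂P)) := by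
    refine tendsto_integral_of_dominated_convergence (fun _ => (1:ℝ))
      (fun N => (hf.indicator (hGm N)).aestronglyMeasurable)
      (integrable_const 1) (fun N => ?_) ?_
    · filter_upwards with ω
      rw [Real.norm_eq_abs]
      rcases Set.indicator_eq_zero_or_self (G N) f ω with h | h <;> rw [h] <;>
        simp [abs_nonneg, hb ω]
    · filter_upwards with ω
      by_cases hω : ω ∈ A
      · rw [Set.indicator_of_mem hω]
        obtain ⟨n, hn⟩ := hω
        apply tendsto_atTop_of_eventually_const (i₀ := n+1)
        intro N hN
        have : ω ∈ G N := lt_of_lt_of_le hn (birkhoffSum_le_maxS T f N (n+1) ω hN)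
        rw [Set.indicator_of_mem this]
      · rw [Set.indicator_of_notMem hω]
        have : ∀ N, ω ∉ G N := by
          intro N hmem
          obtain ⟨n, hn1, hnN, hval⟩ := maxS_pos_exists T f N ω hmem
          obtain ⟨m, rfl⟩ := Nat.exists_eq_add_of_le hn1
          exact hω ⟨m, by rw [add_comm 1 m] at hval; rw [hval]; exact hmem⟩
        simp only [Set.indicator_of_notMem (this _)]
        exact tendsto_const_nhds
  have hge : 0 ≤ ∫ ω, Set.indicator A f ω ∂P := by
    refine ge_of_tendsto hlim ?_
    filter_upwards [eventually_ge_atTop 1] with N hN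
    obtain ⟨M, rfl⟩ := Nat.exists_eq_add_of_le hN
    rw [add_comm 1 M]
    exact key M
  rwa [integral_indicator hA] at hge

set_option maxHeartbeats 1600000 in
/-- for an invertible ergodic measure-preserving transformation θ and a
set E with P(E) > 1 − α, almost surely every block of at least βN consecutive integers
in [−N, 0] (N large) contains a visit time to E. -/
theorem statement12 {Ω : Type*} [MeasurableSpace Ω] (P : Measure Ω)
    [IsProbabilityMeasure P] (θ : Equiv.Perm Ω)
    (hθ : Measurable θ) (hθ' : Measurable θ.symm) (herg : Ergodic (⇑θ) P)
    (E : Set Ω) (hE : MeasurableSet E)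
    (α : ℝ) (hα : α ∈ Set.Ioo (0 : ℝ) 1) (hPE : ENNReal.ofReal (1 - α) < P E) :
    ∀ β : ℝ, α < β → β < 1 →
      ∀ᵐ ω ∂P, ∃ N₀ : ℕ, ∀ N : ℕ, N₀ ≤ N →
        ∀ a c : ℤ, -(N : ℤ) ≤ a → c ≤ 0 → β * (N : ℝ) ≤ (c : ℝ) - (a : ℝ) + 1 →
          ∃ n : ℤ, a ≤ n ∧ n ≤ c ∧ (θ ^ n) ω ∈ E := by
  intro β hαβ hβ1
  obtain ⟨hα0, hα1⟩ := hα
  set lam : ℝ := (α + β) / 2 with hlam_def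
  have hαlam : α < lam := by rw [hlam_def]; linarith
  have hlamβ : lam < β := by rw [hlam_def]; linarith
  have hlam1 : lam < 1 := by linarith
  obtain ⟨q₀, hq₀α, hq₀lam⟩ := exists_rat_btwn hαlam
  set T : Ω → Ω := ⇑θ.symm with hT_def
  set g : Ω → ℝ := Set.indicator Eᶜ 1 with hg_def
  set count : ℕ → Ω → ℝ := fun n ω => birkhoffSum T g n ω with hcount_def
  set f : Ω → ℝ := fun ω => g ω - (q₀ : ℝ) with hf_def
  have hg0 : ∀ x, 0 ≤ g x := fun x => Set.indicator_nonneg (fun _ _ => zero_le_one) x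
  have hg1 : ∀ x, g x ≤ 1 := by
    intro x
    rw [hg_def]
    by_cases hx : x ∈ Eᶜ <;> simp [hx]
  have hgmeas : Measurable g := measurable_const.indicator hE.compl
  have hq₀0 : (0 : ℝ) < q₀ := lt_trans hα0 hq₀α
  have hq₀1 : (q₀ : ℝ) < 1 := by linarith
  have hfmeas : Measurable f := hgmeas.sub measurable_const
  have hfb : ∀ x, |f x| ≤ 1 := by
    intro x
    rw [hf_def, abs_le]
    constructor
    · have := hg0 x; dsimp only; linarith
    · have := hg1 x; dsimp only; linarith
  have hcount0 : ∀ n ω, 0 ≤ count n ω := fun n ω =>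
    Finset.sum_nonneg fun k _ => hg0 _
  have hcount_meas : ∀ n, Measurable (count n) := fun n =>
    measurable_birkhoffSum T g hθ' hgmeas n
  have hsum : ∀ (n : ℕ) ω, birkhoffSum T f n ω = count n ω - q₀ * n := by
    intro n ω
    simp only [hf_def, hcount_def, birkhoffSum, Finset.sum_sub_distrib,
      Finset.sum_const, Finset.card_range, nsmul_eq_mul]
    ring
  have hrel : ∀ (n : ℕ) ω, count (n + 1) (θ ω) = g (θ ω) + count n ω := by
    intro n ω
    simp only [hcount_def]
    rw [birkhoffSum_succ']
    congr 2
    rw [hT_def]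
    exact Equiv.symm_apply_apply θ ω
  set e : Ω ≃ᵐ Ω :=
    { toEquiv := θ, measurable_toFun := hθ, measurable_invFun := hθ' } with he_def
  have hTP : MeasurePreserving T P P := by
    have h0 : MeasurePreserving (⇑e) P P := herg.toMeasurePreserving
    exact MeasurePreserving.symm e h0
  have hTe : MeasurableEmbedding T := e.symm.measurableEmbedding
  set D : Set Ω := {ω | ∀ q : ℚ, (q : ℝ) < lam → ∀ N₀ : ℕ,
      ∃ n : ℕ, N₀ ≤ n ∧ (q : ℝ) * n ≤ count n ω} with hD_def
  have hD : MeasurableSet D := by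
    have hDeq : D = ⋂ (q : ℚ), ⋂ (_ : (q : ℝ) < lam), ⋂ (N₀ : ℕ), ⋃ (n : ℕ),
        ⋃ (_ : N₀ ≤ n), {ω | (q : ℝ) * n ≤ count n ω} := by
      ext ω; simp [hD_def]
    rw [hDeq]
    exact MeasurableSet.iInter fun q => MeasurableSet.iInter fun _ =>
      MeasurableSet.iInter fun N₀ => MeasurableSet.iUnion fun n =>
      MeasurableSet.iUnion fun _ =>
      measurableSet_le measurable_const (hcount_meas n)
  have hDinv : (⇑θ) ⁻¹' D = D := by
    ext ω
    simp only [Set.mem_preimage, hD_def, Set.mem_setOf_eq]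
    constructor
    · intro h q hq N₀
      rcases le_or_gt (q : ℝ) 0 with hq0 | hq0
      · exact ⟨N₀, le_rfl,
          le_trans (mul_nonpos_of_nonpos_of_nonneg hq0 (Nat.cast_nonneg _)) (hcount0 _ _)⟩
      · obtain ⟨q', hq1, hq2⟩ := exists_rat_btwn hq
        have hq'q : (0 : ℝ) < (q' : ℝ) - q := by linarith
        set N₂ : ℕ := ⌈(1 : ℝ) / ((q' : ℝ) - q)⌉₊ with hN₂_def
        obtain ⟨n, hn, hcnt⟩ := h q' hq2 (max (N₀ + 1) (N₂ + 1))
        have hn1 : 1 ≤ n := le_trans (le_trans (Nat.le_add_left 1 N₀) (le_max_left _ _)) hn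
        obtain ⟨m, rfl⟩ : ∃ m, n = m + 1 := ⟨n - 1, by omega⟩
        have hrw := hrel m ω
        rw [hrw] at hcnt
        have hgb := hg1 (θ ω)
        refine ⟨m, by omega, ?_⟩
        have hm2 : (N₂ : ℝ) ≤ m := by
          have : N₂ + 1 ≤ m + 1 := le_trans (le_max_right _ _) hn
          exact_mod_cast Nat.succ_le_succ_iff.mp this
        have hceil : (1 : ℝ) / ((q' : ℝ) - q) ≤ N₂ := Nat.le_ceil _
        have h1 : (1 : ℝ) ≤ ((q' : ℝ) - q) * m := by
          rw [div_le_iff₀ hq'q] at hceil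
          nlinarith
        push_cast at hcnt ⊢
        nlinarith
    · intro h q hq N₀
      rcases le_or_gt (q : ℝ) 0 with hq0 | hq0
      · exact ⟨N₀, le_rfl,
          le_trans (mul_nonpos_of_nonpos_of_nonneg hq0 (Nat.cast_nonneg _)) (hcount0 _ _)⟩
      · obtain ⟨q', hq1, hq2⟩ := exists_rat_btwn hq
        have hq'q : (0 : ℝ) < (q' : ℝ) - q := by linarith
        have hqlt1 : (q : ℝ) < 1 := by linarith
        set N₂ : ℕ := ⌈(1 : ℝ) / ((q' : ℝ) - q)⌉₊ with hN₂_def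
        obtain ⟨n, hn, hcnt⟩ := h q' hq2 (max N₀ N₂)
        refine ⟨n + 1, by omega, ?_⟩
        rw [hrel n ω]
        have hgb := hg0 (θ ω)
        have hm2 : (N₂ : ℝ) ≤ n := by exact_mod_cast le_trans (le_max_right _ _) hn
        have hceil : (1 : ℝ) / ((q' : ℝ) - q) ≤ N₂ := Nat.le_ceil _
        have h1 : (1 : ℝ) ≤ ((q' : ℝ) - q) * n := by
          rw [div_le_iff₀ hq'q] at hceil
          nlinarith
        push_cast
        nlinarith
  -- the maximal set
  set A : Set Ω := {x | ∃ n : ℕ, 0 < birkhoffSum T f (n + 1) x} with hA_def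
  have hA : MeasurableSet A := by
    have : A = ⋃ n : ℕ, {x | 0 < birkhoffSum T f (n + 1) x} := by
      ext x; simp [hA_def]
    rw [this]
    exact MeasurableSet.iUnion fun n =>
      measurableSet_lt measurable_const (measurable_birkhoffSum T f hθ' hfmeas (n + 1))
  have hmax : 0 ≤ ∫ ω in A, f ω ∂P :=
    maximal_ergodic P T hθ' hTe hTP f hfmeas hfb
  have hgint : IntegrableOn g A P := by
    have hconst : IntegrableOn (fun _ => (1 : ℝ)) A P :=
      integrableOn_const (measure_ne_top P A)
    refine Integrable.mono' hconst hgmeas.aestronglyMeasurable ?_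
    filter_upwards with x
    rw [Real.norm_eq_abs, abs_of_nonneg (hg0 x)]
    exact hg1 x
  have hPA : (q₀ : ℝ) * (P A).toReal ≤ (P Eᶜ).toReal := by
    have h1 : ∫ ω in A, f ω ∂P
        = (∫ ω in A, g ω ∂P) - (q₀ : ℝ) * (P A).toReal := by
      have : ∫ ω in A, f ω ∂P
          = (∫ ω in A, g ω ∂P) - ∫ _ω in A, (q₀ : ℝ) ∂P := by
        rw [hf_def]
        exact integral_sub hgint (integrableOn_const (measure_ne_top P A))
      rw [this, setIntegral_const, smul_eq_mul, mul_comm, measureReal_def]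
    have h2 : ∫ ω in A, g ω ∂P = (P (A ∩ Eᶜ)).toReal := by
      rw [hg_def, setIntegral_indicator hE.compl]
      simp only [Pi.one_apply]
      rw [setIntegral_const, smul_eq_mul, mul_one, measureReal_def]
    have h3 : (P (A ∩ Eᶜ)).toReal ≤ (P Eᶜ).toReal :=
      ENNReal.toReal_mono (measure_ne_top P _) (measure_mono Set.inter_subset_right)
    rw [h1, h2] at hmax
    linarith
  have hPEc : (P Eᶜ).toReal < α := by
    have hEtop : P E ≠ ⊤ := measure_ne_top P E
    have h1 : 1 - α < (P E).toReal := by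
      have := (ENNReal.toReal_lt_toReal ENNReal.ofReal_ne_top hEtop).mpr hPE
      rwa [ENNReal.toReal_ofReal (by linarith)] at this
    have h2 : (P Eᶜ).toReal = 1 - (P E).toReal := by
      rw [measure_compl hE hEtop, measure_univ,
        ENNReal.toReal_sub_of_le prob_le_one ENNReal.one_ne_top, ENNReal.toReal_one]
    linarith
  have hDA : D ⊆ A := by
    intro ω hω
    obtain ⟨q₁, hq11, hq12⟩ := exists_rat_btwn hq₀lam
    obtain ⟨n, hn1, hcnt⟩ := hω q₁ hq12 1
    obtain ⟨m, rfl⟩ : ∃ m, n = m + 1 := ⟨n - 1, by omega⟩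
    refine ⟨m, ?_⟩
    rw [hsum]
    have hmpos : (0 : ℝ) < (m : ℝ) + 1 := by positivity
    push_cast at hcnt ⊢
    nlinarith
  have hPD : P D = 0 := by
    rcases herg.toPreErgodic.measure_self_or_compl_eq_zero hD hDinv with h | h
    · exact h
    · exfalso
      have hPD1 : P D = 1 := by
        have hcompl := measure_compl hD (measure_ne_top P D)
        rw [measure_univ, h] at hcompl
        have h1 : (1 : ENNReal) ≤ P D := tsub_eq_zero_iff_le.mp hcompl.symm
        exact le_antisymm prob_le_one h1
      have hPA1 : P A = 1 :=
        le_antisymm prob_le_one (hPD1 ▸ measure_mono hDA)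
      rw [hPA1, ENNReal.toReal_one, mul_one] at hPA
      linarith
  filter_upwards [measure_eq_zero_iff_ae_notMem.mp hPD] with ω hω
  have hnb : ∃ N₀ : ℕ, ∀ N : ℕ, N₀ ≤ N → count (N + 1) ω < β * N := by
    by_contra hcon
    push_neg at hcon
    apply hω
    simp only [hD_def, Set.mem_setOf_eq]
    intro q hq N₀
    rcases le_or_gt (q : ℝ) 0 with hq0 | hq0
    · exact ⟨N₀, le_rfl,
        le_trans (mul_nonpos_of_nonpos_of_nonneg hq0 (Nat.cast_nonneg _)) (hcount0 _ _)⟩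
    · have hβq : (0 : ℝ) < β - q := by linarith
      have hqlt1 : (q : ℝ) < 1 := by linarith
      set N₄ : ℕ := ⌈(1 : ℝ) / (β - q)⌉₊ with hN₄_def
      obtain ⟨N, hN, hcnt⟩ := hcon (max N₀ N₄)
      refine ⟨N + 1, by omega, ?_⟩
      have h5 : (N₄ : ℝ) ≤ N := by exact_mod_cast le_trans (le_max_right _ _) hN
      have hceil : (1 : ℝ) / (β - q) ≤ N₄ := Nat.le_ceil _
      have h6 : (1 : ℝ) ≤ (β - q) * N := by
        rw [div_le_iff₀ hβq] at hceil
        nlinarith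
      push_cast
      nlinarith
  obtain ⟨N₀, hN₀⟩ := hnb
  refine ⟨max N₀ 1, fun N hN a c ha hc2 hlen => ?_⟩
  by_contra hcon
  push_neg at hcon
  have hN1 : 1 ≤ N := le_trans (le_max_right _ _) hN
  have hN0' : N₀ ≤ N := le_trans (le_max_left _ _) hN
  have hNpos : (0 : ℝ) < N := by exact_mod_cast hN1
  have hβN : 0 < β * N := mul_pos (by linarith) hNpos
  have hac : a ≤ c := by
    have h1 : (0 : ℝ) < (c : ℝ) - a + 1 := lt_of_lt_of_le hβN hlen
    have h2 : (a : ℝ) < (c : ℝ) + 1 := by linarith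
    have h3 : a < c + 1 := by exact_mod_cast h2
    omega
  have ha0 : (0 : ℤ) ≤ -a := by omega
  have hc0 : (0 : ℤ) ≤ -c := by omega
  have hmem : ∀ k : ℕ, k ∈ Finset.Icc (-c).toNat (-a).toNat → g (T^[k] ω) = 1 := by
    intro k hk
    rw [Finset.mem_Icc] at hk
    have h1 : a ≤ -(k : ℤ) := by omega
    have h2 : -(k : ℤ) ≤ c := by omega
    have hmemE := hcon (-(k : ℤ)) h1 h2
    have hiter : T^[k] ω = (θ ^ (-(k : ℤ))) ω := by
      have hz : θ ^ (-(k : ℤ)) = θ⁻¹ ^ k := by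
        rw [zpow_neg, zpow_natCast, inv_pow]
      rw [hz, ← Equiv.Perm.iterate_eq_pow]
      rfl
    rw [hiter, hg_def]
    exact Set.indicator_of_mem hmemE 1
  have hsub : Finset.Icc (-c).toNat (-a).toNat ⊆ Finset.range (N + 1) := by
    intro k hk
    rw [Finset.mem_Icc] at hk
    rw [Finset.mem_range]
    omega
  have hcard : ((c : ℝ) - a + 1) ≤ count (N + 1) ω := by
    have h1 : ∑ k ∈ Finset.Icc (-c).toNat (-a).toNat, g (T^[k] ω)
        ≤ ∑ k ∈ Finset.range (N + 1), g (T^[k] ω) :=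
      Finset.sum_le_sum_of_subset_of_nonneg hsub (fun k _ _ => hg0 _)
    have h2 : ∑ k ∈ Finset.Icc (-c).toNat (-a).toNat, g (T^[k] ω)
        = ((Finset.Icc (-c).toNat (-a).toNat).card : ℝ) := by
      rw [Finset.sum_congr rfl hmem, Finset.sum_const, nsmul_eq_mul, mul_one]
    have hnateq : (((-a).toNat + 1 - (-c).toNat : ℕ) : ℤ) = c - a + 1 := by omega
    have h3 : (((Finset.Icc (-c).toNat (-a).toNat).card : ℕ) : ℝ) = (c : ℝ) - a + 1 := by
      rw [Nat.card_Icc]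
      exact_mod_cast congrArg (Int.cast : ℤ → ℝ) hnateq
    have h4 : count (N + 1) ω = ∑ k ∈ Finset.range (N + 1), g (T^[k] ω) := rfl
    rw [h4, ← h3, ← h2]
    exact h1
  have := hN₀ N hN0'
  linarith
end

section
/- Let ψ⁻ be a backward stationary solution and ψ⁺ be a forward stationary solution, and define Q^∞(x, n) = ψ⁻(x, n) − ψ⁺(x, n). Suppose η : (−∞, 0] → 𝕋^d is a backward minimizer for ψ⁻ at η(0): an absolutely continuous curve each compact restriction of which attains the action function between its endpoints, such that ψ⁻(η(0), 0) = ψ⁻(η(m), m) + A_{m,0}(η(m), η(0)) for every integer m < 0. Then Q^∞(η(j), j) ≤ Q^∞(η(k), k) for all integers j < k ≤ 0. -/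
open MeasureTheory

noncomputable section

namespace Statement19Aux

variable {d : ℕ}

lemma coe_fract (x : ℝ) : ((x : AddCircle (1:ℝ))) = (((Int.fract x : ℝ)) : AddCircle (1:ℝ)) := by
  rw [eq_comm, QuotientAddGroup.eq]
  simp only [AddSubgroup.mem_zmultiples_iff]
  refine ⟨⌊x⌋, ?_⟩
  have := Int.self_sub_fract x
  simp only [zsmul_eq_mul, mul_one]
  linarith

/-- Each potential (composed with projT) is bounded, by periodicity and compactness. -/
lemma exists_bound (f : V d → ℝ) (hf : Continuous f)
    (hper : ∀ x : V d, f x = f (WithLp.toLp 2 (fun i => Int.fract (x i)) : V d)) :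
    ∃ M : ℝ, ∀ x : V d, |f x| ≤ M := by
  obtain ⟨M, hM⟩ := (isCompact_closedBall (0 : V d) (Real.sqrt d)).exists_bound_of_continuousOn
    hf.continuousOn
  refine ⟨M, fun x => ?_⟩
  set y : V d := (WithLp.toLp 2 (fun i => Int.fract (x i)) : V d) with hydef
  have hnorm : ‖y‖ ≤ Real.sqrt d := by
    rw [EuclideanSpace.norm_eq]
    apply Real.sqrt_le_sqrt
    calc ∑ i, ‖y i‖ ^ 2 ≤ ∑ _i : Fin d, 1 := by
          refine Finset.sum_le_sum fun i _ => ?_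
          have h1 := Int.fract_nonneg (x i)
          have h2 := Int.fract_lt_one (x i)
          rw [Real.norm_eq_abs, show y i = Int.fract (x i) from rfl, abs_of_nonneg h1]
          nlinarith
      _ = d := by simp
  have hy : y ∈ Metric.closedBall (0 : V d) (Real.sqrt d) := by
    rw [Metric.mem_closedBall, dist_zero_right]; exact hnorm
  rw [hper x]
  exact hM _ hy

lemma projT_fract (x : V d) : projT x = projT (WithLp.toLp 2 (fun i => Int.fract (x i)) : V d) := by
  funext i
  exact coe_fract (x i)

lemma potential_bound (F : ℤ → Torus d → ℝ)
    (hF : ∀ j : ℤ, ContDiff ℝ 2 fun x : V d => F j (projT x)) :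
    ∃ M : ℤ → ℝ, ∀ j (y : Torus d), |F j y| ≤ M j := by
  have h : ∀ j : ℤ, ∃ M : ℝ, ∀ x : V d, |F j (projT x)| ≤ M := fun j =>
    exists_bound _ (hF j).continuous (fun x => by rw [projT_fract x])
  choose M hM using h
  refine ⟨M, fun j y => ?_⟩
  have hsurj : ∃ x : V d, projT x = y := by
    refine ⟨(WithLp.toLp 2 (fun i => (Quotient.out (y i) : ℝ)) : V d), funext fun i => ?_⟩
    show ((Quotient.out (y i) : ℝ) : AddCircle (1:ℝ)) = y i
    exact Quotient.out_eq (y i)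
  obtain ⟨x, rfl⟩ := hsurj
  exact hM j x

/-- The Lagrangian integrand is integrable for an AC curve. -/
lemma integrand_integrable (b : V d) (g : ℝ → V d) (s t : ℝ)
    (h1 : IntegrableOn g (Set.Icc s t)) (h2 : IntegrableOn (fun τ => ‖g τ‖ ^ 2) (Set.Icc s t)) :
    IntegrableOn (fun τ => (1 : ℝ) / 2 * ‖g τ‖ ^ 2 - (inner ℝ b (g τ) : ℝ)) (Set.Icc s t) := by
  have hi : IntegrableOn (fun τ => (inner ℝ b (g τ) : ℝ)) (Set.Icc s t) := by
    have := (innerSL ℝ b).integrable_comp h1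
    simp at this
    exact this
  exact (h2.const_mul _).sub hi

/-- Lower bound for the action over all AC curves on [s,t]. -/
lemma action_lb (F : ℤ → Torus d → ℝ)
    (hF : ∀ j : ℤ, ContDiff ℝ 2 fun x : V d => F j (projT x)) (b : V d) (s t : ℝ)
    (hst : s ≤ t) :
    ∃ C : ℝ, ∀ ζ g : ℝ → V d, IsAC ζ g s t → C ≤ action F b ζ g s t := by
  obtain ⟨M, hM⟩ := potential_bound F hF
  refine ⟨-((t - s) * ‖b‖ ^ 2 / 2) - ∑ j ∈ Finset.Ico ⌈s⌉ ⌈t⌉, M j, fun ζ g hac => ?_⟩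
  obtain ⟨h1, h2, -⟩ := hac
  have hint := integrand_integrable b g s t h1 h2
  have hIle : -((t - s) * ‖b‖ ^ 2 / 2) ≤
      ∫ τ in s..t, ((1 : ℝ) / 2 * ‖g τ‖ ^ 2 - (inner ℝ b (g τ) : ℝ)) := by
    have hconst : IntervalIntegrable (fun _ : ℝ => -(‖b‖ ^ 2 / 2)) volume s t :=
      intervalIntegrable_const
    have hii : IntervalIntegrable
        (fun τ => (1 : ℝ) / 2 * ‖g τ‖ ^ 2 - (inner ℝ b (g τ) : ℝ)) volume s t := by
      rw [intervalIntegrable_iff_integrableOn_Icc_of_le hst] at *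
      exact hint
    have hmono := intervalIntegral.integral_mono_on hst hconst hii (fun τ _ => by
      have hip : (inner ℝ b (g τ) : ℝ) ≤ ‖b‖ * ‖g τ‖ := real_inner_le_norm b (g τ)
      nlinarith [sq_nonneg (‖b‖ - ‖g τ‖), norm_nonneg (g τ), norm_nonneg b])
    simpa using hmono
  have hS : ∑ j ∈ Finset.Ico ⌈s⌉ ⌈t⌉, F j (projT (ζ (j : ℝ))) ≤
      ∑ j ∈ Finset.Ico ⌈s⌉ ⌈t⌉, M j :=
    Finset.sum_le_sum fun j _ => (abs_le.mp (hM j _)).2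
  unfold action
  nlinarith [hIle, hS]

/-- Existence of a straight-line AC curve between any two torus points. -/
lemma exists_curve (s t : ℝ) (hst : s < t) (x x' : Torus d) :
    ∃ ζ g : ℝ → V d, IsAC ζ g s t ∧ projT (ζ s) = x ∧ projT (ζ t) = x' := by
  have hx : ∃ X : V d, projT X = x :=
    ⟨(WithLp.toLp 2 (fun i => (Quotient.out (x i) : ℝ)) : V d), funext fun i => Quotient.out_eq (x i)⟩
  have hx' : ∃ X' : V d, projT X' = x' :=
    ⟨(WithLp.toLp 2 (fun i => (Quotient.out (x' i) : ℝ)) : V d), funext fun i => Quotient.out_eq (x' i)⟩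
  obtain ⟨X, rfl⟩ := hx
  obtain ⟨X', rfl⟩ := hx'
  set c : V d := (1 / (t - s)) • (X' - X) with hc
  refine ⟨fun τ => X + (τ - s) • c, fun _ => c, ⟨?_, ?_, ?_⟩, ?_, ?_⟩
  · exact integrableOn_const measure_Icc_lt_top.ne
  · exact integrableOn_const measure_Icc_lt_top.ne
  · intro τ hτ
    rw [intervalIntegral.integral_const]
    simp
  · simp
  · have hts : t - s ≠ 0 := sub_ne_zero.mpr hst.ne'
    have : (t - s) • c = X' - X := by
      rw [hc, smul_smul]
      field_simp
      rw [one_smul]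
    show projT (X + (t - s) • c) = projT X'
    rw [this]
    have h2 : X + (X' - X) = X' := by abel
    rw [h2]

/-- actFn is bounded below. -/
lemma actFn_ge (F : ℤ → Torus d → ℝ)
    (hF : ∀ j : ℤ, ContDiff ℝ 2 fun x : V d => F j (projT x)) (b : V d) (s t : ℝ)
    (hst : s < t) :
    ∃ C : ℝ, ∀ x x' : Torus d, C ≤ actFn F b s t x x' := by
  obtain ⟨C, hC⟩ := action_lb F hF b s t hst.le
  refine ⟨C, fun x x' => ?_⟩
  apply le_csInf
  · obtain ⟨ζ, g, hac, h1, h2⟩ := exists_curve s t hst x x'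
    exact ⟨action F b ζ g s t, ζ, g, hac, h1, h2, rfl⟩
  · rintro a ⟨ζ, g, hac, -, -, rfl⟩
    exact hC ζ g hac

/-- Additivity of the action of a single curve. -/
lemma action_add (F : ℤ → Torus d → ℝ) (b : V d) (ζ g : ℝ → V d) (r s t : ℝ)
    (hrs : r ≤ s) (hst : s ≤ t) (h : IsAC ζ g r t) :
    action F b ζ g r t = action F b ζ g r s + action F b ζ g s t := by
  obtain ⟨h1, h2, -⟩ := h
  have hint := integrand_integrable b g r t h1 h2
  have hi1 : IntervalIntegrable
      (fun τ => (1 : ℝ) / 2 * ‖g τ‖ ^ 2 - (inner ℝ b (g τ) : ℝ)) volume r s := by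
    rw [intervalIntegrable_iff_integrableOn_Icc_of_le hrs]
    exact hint.mono_set (Set.Icc_subset_Icc le_rfl hst)
  have hi2 : IntervalIntegrable
      (fun τ => (1 : ℝ) / 2 * ‖g τ‖ ^ 2 - (inner ℝ b (g τ) : ℝ)) volume s t := by
    rw [intervalIntegrable_iff_integrableOn_Icc_of_le hst]
    exact hint.mono_set (Set.Icc_subset_Icc hrs le_rfl)
  have hI := intervalIntegral.integral_add_adjacent_intervals hi1 hi2
  have hSum : ((∑ j ∈ Finset.Ico ⌈r⌉ ⌈s⌉, F j (projT (ζ (j : ℝ)))) +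
      ∑ j ∈ Finset.Ico ⌈s⌉ ⌈t⌉, F j (projT (ζ (j : ℝ)))) =
      ∑ j ∈ Finset.Ico ⌈r⌉ ⌈t⌉, F j (projT (ζ (j : ℝ))) := by
    rw [← Finset.sum_union (Finset.Ico_disjoint_Ico_consecutive _ _ _),
      Finset.Ico_union_Ico_eq_Ico (Int.ceil_le_ceil hrs) (Int.ceil_le_ceil hst)]
  unfold action
  rw [← hI, ← hSum]
  ring

end Statement19Aux

theorem statement19 {d : ℕ} (F : ℤ → Torus d → ℝ)
    (hF : ∀ j : ℤ, ContDiff ℝ 2 fun x : V d => F j (projT x)) (b : V d)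
    (ψm ψp : Torus d → ℤ → ℝ)
    (hψm : IsBackwardSol F b ψm) (hψp : IsForwardSol F b ψp)
    (ζ g : ℝ → V d)
    -- η is an absolutely continuous curve on (−∞, 0], each compact restriction of
    -- which attains the action function between its endpoints:
    (hattain : ∀ a c : ℝ, a < c → c ≤ 0 → IsAC ζ g a c ∧
      action F b ζ g a c = actFn F b a c (projT (ζ a)) (projT (ζ c)))
    -- η is a backward minimizer for ψ⁻ at η(0):
    (hback : ∀ m : ℤ, m < 0 →
      ψm (projT (ζ 0)) 0 = ψm (projT (ζ (m : ℝ))) m +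
        actFn F b m 0 (projT (ζ (m : ℝ))) (projT (ζ 0))) :
    ∀ j k : ℤ, j < k → k ≤ 0 →
      ψm (projT (ζ (j : ℝ))) j - ψp (projT (ζ (j : ℝ))) j ≤
        ψm (projT (ζ (k : ℝ))) k - ψp (projT (ζ (k : ℝ))) k := by
  classical
  haveI : Fact ((0 : ℝ) < 1) := ⟨one_pos⟩
  intro j k hjk hk0
  have hjkR : (j : ℝ) < (k : ℝ) := by exact_mod_cast hjk
  have hk0R : (k : ℝ) ≤ 0 := by exact_mod_cast hk0
  have hj0 : j < 0 := hjk.trans_le hk0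
  have hj0R : (j : ℝ) < 0 := by exact_mod_cast hj0
  obtain ⟨hacjk, heqjk⟩ := hattain (j : ℝ) (k : ℝ) hjkR hk0R
  set A := actFn F b (j : ℝ) (k : ℝ) (projT (ζ (j : ℝ))) (projT (ζ (k : ℝ))) with hA
  -- backward calibration: ψm is exactly transported along ζ
  have Hm : ψm (projT (ζ (j : ℝ))) j + A = ψm (projT (ζ (k : ℝ))) k := by
    rcases eq_or_lt_of_le hk0 with rfl | hk0'
    · have e1 := hback j hj0
      simp only [Int.cast_zero] at hA ⊢
      linarith [e1, hA.symm, hA]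
    · have hk0R' : (k : ℝ) < 0 := by exact_mod_cast hk0'
      obtain ⟨hacj0, heqj0⟩ := hattain (j : ℝ) 0 hj0R le_rfl
      obtain ⟨hack0, heqk0⟩ := hattain (k : ℝ) 0 hk0R' le_rfl
      have hadd := Statement19Aux.action_add F b ζ g (j : ℝ) (k : ℝ) 0 hjkR.le hk0R hacj0
      have e1 := hback j hj0
      have e2 := hback k hk0'
      rw [← heqj0] at e1
      rw [← heqk0] at e2
      linarith [heqjk]
  -- forward inequality
  have Hp : ψp (projT (ζ (k : ℝ))) k - A ≤ ψp (projT (ζ (j : ℝ))) j := by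
    have h := (hψp.2 j k hjk (projT (ζ (j : ℝ)))).symm
    rw [KChk, if_pos hjkR] at h
    obtain ⟨C0, hC0⟩ := Statement19Aux.actFn_ge F hF b (j : ℝ) (k : ℝ) hjkR
    obtain ⟨ymax, -, hymax⟩ :=
      isCompact_univ.exists_isMaxOn Set.univ_nonempty ((hψp.1 k).continuousOn)
    have hbdd : BddAbove {a | ∃ y : Torus d,
        a = ψp y k - actFn F b (j : ℝ) (k : ℝ) (projT (ζ (j : ℝ))) y} := by
      refine ⟨ψp ymax k - C0, ?_⟩
      rintro a ⟨y, rfl⟩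
      have h1 : ψp y k ≤ ψp ymax k := hymax (Set.mem_univ y)
      have h2 := hC0 (projT (ζ (j : ℝ))) y
      exact sub_le_sub h1 h2
    have hmem : ψp (projT (ζ (k : ℝ))) k - A ∈ {a | ∃ y : Torus d,
        a = ψp y k - actFn F b (j : ℝ) (k : ℝ) (projT (ζ (j : ℝ))) y} :=
      ⟨projT (ζ (k : ℝ)), rfl⟩
    calc ψp (projT (ζ (k : ℝ))) k - A ≤ _ := le_csSup hbdd hmem
      _ = ψp (projT (ζ (j : ℝ))) j := h.symm
  linarith
end
end
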